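/- arXiv:1204.6391 — 8 statements merged into one kernel-verified Lean document; each statement's English description precedes it below -/
import Mathlib

section
/- For every finite poset P, every subset S of its elements, and every function σ: S → ℝ that is strictly monotone with respect to P (i.e., u < v in P implies σ(u) < σ(v) for u, v ∈ S), there exists a function τ: P → ℝ that is strictly monotone with respect to P and satisfies τ(u) = σ(u) for all u ∈ S. -/
open Finset in
private lemma stmt0_aux {P : Type*} [Fintype P] [DecidableEq P] [PartialOrder P] :
    ∀ (n : ℕ) (T : Finset P), (Finset.univ \ T).card ≤ n →
    ∀ σ : P → ℝ, (∀ u ∈ T, ∀ v ∈ T, u < v → σ u < σ v) →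
    ∃ τ : P → ℝ, (∀ u v : P, u < v → τ u < τ v) ∧ ∀ u ∈ T, τ u = σ u := by
  classical
  intro n
  induction n with
  | zero =>
    intro T hT σ hσ
    have hTu : T = Finset.univ := by
      have : Finset.univ \ T = ∅ := Finset.card_eq_zero.mp (Nat.le_zero.mp hT)
      have := Finset.sdiff_eq_empty_iff_subset.mp this
      exact Finset.eq_univ_iff_forall.mpr fun x => this (Finset.mem_univ x)
    exact ⟨σ, fun u v huv => hσ u (hTu ▸ Finset.mem_univ u) v (hTu ▸ Finset.mem_univ v) huv,
      fun u _ => rfl⟩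
  | succ n ih =>
    intro T hT σ hσ
    by_cases hfull : (Finset.univ \ T) = ∅
    · have hTu : T = Finset.univ := by
        have := Finset.sdiff_eq_empty_iff_subset.mp hfull
        exact Finset.eq_univ_iff_forall.mpr fun x => this (Finset.mem_univ x)
      exact ⟨σ, fun u v huv => hσ u (hTu ▸ Finset.mem_univ u) v (hTu ▸ Finset.mem_univ v) huv,
        fun u _ => rfl⟩
    · obtain ⟨x, hx⟩ := Finset.nonempty_iff_ne_empty.mpr hfull
      have hxT : x ∉ T := (Finset.mem_sdiff.mp hx).2
      set A : Finset ℝ := (T.filter (· < x)).image σ with hA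
      set B : Finset ℝ := (T.filter (x < ·)).image σ with hB
      -- every element of A is below every element of B
      have hAB : ∀ a ∈ A, ∀ b ∈ B, a < b := by
        intro a ha b hb
        obtain ⟨u, hu, rfl⟩ := Finset.mem_image.mp ha
        obtain ⟨v, hv, rfl⟩ := Finset.mem_image.mp hb
        have hu' := Finset.mem_filter.mp hu
        have hv' := Finset.mem_filter.mp hv
        exact hσ u hu'.1 v hv'.1 (lt_trans hu'.2 hv'.2)
      obtain ⟨t, htA, htB⟩ : ∃ t : ℝ, (∀ a ∈ A, a < t) ∧ (∀ b ∈ B, t < b) := by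
        by_cases hAne : A.Nonempty
        · by_cases hBne : B.Nonempty
          · refine ⟨(A.max' hAne + B.min' hBne) / 2, ?_, ?_⟩
            · intro a ha
              have h1 : a ≤ A.max' hAne := Finset.le_max' A a ha
              have h2 : A.max' hAne < B.min' hBne :=
                hAB _ (A.max'_mem hAne) _ (B.min'_mem hBne)
              linarith
            · intro b hb
              have h1 : B.min' hBne ≤ b := Finset.min'_le B b hb
              have h2 : A.max' hAne < B.min' hBne :=
                hAB _ (A.max'_mem hAne) _ (B.min'_mem hBne)
              linarith
          · refine ⟨A.max' hAne + 1, ?_, ?_⟩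
            · intro a ha
              have := Finset.le_max' A a ha
              linarith
            · intro b hb
              exact absurd ⟨b, hb⟩ hBne
        · by_cases hBne : B.Nonempty
          · refine ⟨B.min' hBne - 1, ?_, ?_⟩
            · intro a ha
              exact absurd ⟨a, ha⟩ hAne
            · intro b hb
              have := Finset.min'_le B b hb
              linarith
          · exact ⟨0, fun a ha => absurd ⟨a, ha⟩ hAne,
              fun b hb => absurd ⟨b, hb⟩ hBne⟩
      set σ' : P → ℝ := Function.update σ x t with hσ'
      have hcard : (Finset.univ \ insert x T).card ≤ n := by
        have h1 : Finset.univ \ insert x T = (Finset.univ \ T).erase x := by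
          ext y
          simp only [Finset.mem_sdiff, Finset.mem_erase, Finset.mem_insert, Finset.mem_univ,
            true_and, not_or]
        rw [h1, Finset.card_erase_of_mem hx]
        omega
      have hcompat : ∀ u ∈ insert x T, ∀ v ∈ insert x T, u < v → σ' u < σ' v := by
        intro u hu v hv huv
        rcases Finset.mem_insert.mp hu with rfl | huT
        · rcases Finset.mem_insert.mp hv with rfl | hvT
          · exact absurd huv (lt_irrefl _)
          · have hvx : v ≠ u := fun h => hxT (h ▸ hvT)
            rw [hσ', Function.update_self, Function.update_of_ne hvx]
            exact htB _ (Finset.mem_image.mpr ⟨v, Finset.mem_filter.mpr ⟨hvT, huv⟩, rfl⟩)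
        · rcases Finset.mem_insert.mp hv with rfl | hvT
          · have hux : u ≠ v := fun h => hxT (h ▸ huT)
            rw [hσ', Function.update_self, Function.update_of_ne hux]
            exact htA _ (Finset.mem_image.mpr ⟨u, Finset.mem_filter.mpr ⟨huT, huv⟩, rfl⟩)
          · have hux : u ≠ x := fun h => hxT (h ▸ huT)
            have hvx : v ≠ x := fun h => hxT (h ▸ hvT)
            rw [hσ', Function.update_of_ne hux, Function.update_of_ne hvx]
            exact hσ u huT v hvT huv
      obtain ⟨τ, hτ1, hτ2⟩ := ih (insert x T) hcard σ' hcompat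
      refine ⟨τ, hτ1, fun u hu => ?_⟩
      have hux : u ≠ x := fun h => hxT (h ▸ hu)
      rw [hτ2 u (Finset.mem_insert_of_mem hu), hσ', Function.update_of_ne hux]

/-- Every P-compatible real-valued function on a subset S of a finite poset
extends to a P-compatible function on all of P. -/
theorem stmt0 {P : Type*} [Fintype P] [PartialOrder P] (S : Set P) (σ : P → ℝ)
    (hσ : ∀ u ∈ S, ∀ v ∈ S, u < v → σ u < σ v) :
    ∃ τ : P → ℝ, (∀ u v : P, u < v → τ u < τ v) ∧ ∀ u ∈ S, τ u = σ u := by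
  classical
  obtain ⟨τ, h1, h2⟩ := stmt0_aux (Finset.univ \ S.toFinset).card S.toFinset le_rfl σ
    (fun u hu v hv huv => hσ u (Set.mem_toFinset.mp hu) v (Set.mem_toFinset.mp hv) huv)
  exact ⟨τ, h1, fun u hu => h2 u (Set.mem_toFinset.mpr hu)⟩
end

section
/- Let P be a finite poset with a partial representation φ: S → C([0,1],ℝ) (S ⊆ P), and for each u ∈ P let Reg(u) be the region of u as defined from φ. If two elements u and v of P are incomparable and there exists a representation of P extending φ, then Reg(u) ∩ Reg(v) ≠ ∅. -/
open Classical

/-- The region of a vertex `u` determined by a partial representation `φ` defined on `S`. -/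
noncomputable def Reg {P : Type*} [PartialOrder P] (S : Set P) (φ : P → C(unitInterval, ℝ)) (u : P) :
    Set (unitInterval × ℝ) :=
  if u ∈ S then {p | p.2 = φ u p.1}
  else {p | (∀ a ∈ S, u < a → p.2 < φ a p.1) ∧ ∀ a ∈ S, a < u → φ a p.1 < p.2}

lemma mem_reg_of_eq {P : Type*} [PartialOrder P] (S : Set P)
    (φ ψ : P → C(unitInterval, ℝ))
    (hψ : ∀ u v : P, u < v ↔ ∀ x, ψ u x < ψ v x) (hext : ∀ a ∈ S, ψ a = φ a)
    (w : P) (x : unitInterval) : (x, ψ w x) ∈ Reg S φ w := by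
  unfold Reg
  by_cases hw : w ∈ S
  · simp [hw, (hext w hw ▸ rfl : ψ w x = φ w x)]
  · simp only [hw, if_neg, Set.mem_setOf_eq]
    refine ⟨fun a ha hlt => ?_, fun a ha hlt => ?_⟩
    · have := (hψ w a).mp hlt x
      rwa [hext a ha] at this
    · have := (hψ a w).mp hlt x
      rwa [hext a ha] at this

/-- if two elements are incomparable and the partial representation extends
to a full representation, then their regions intersect. -/
theorem stmt2 {P : Type*} [Fintype P] [PartialOrder P] (S : Set P)
    (φ : P → C(unitInterval, ℝ))
    (hφ : ∀ a ∈ S, ∀ b ∈ S, (a < b ↔ ∀ x, φ a x < φ b x))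
    (hex : ∃ ψ : P → C(unitInterval, ℝ),
      (∀ u v : P, u < v ↔ ∀ x, ψ u x < ψ v x) ∧ ∀ a ∈ S, ψ a = φ a)
    (u v : P) (hne : u ≠ v) (h₁ : ¬ u < v) (h₂ : ¬ v < u) :
    (Reg S φ u ∩ Reg S φ v).Nonempty := by
  obtain ⟨ψ, hψ, hext⟩ := hex
  -- find a crossing point
  have hn1 : ¬ ∀ x, ψ u x < ψ v x := fun h => h₁ ((hψ u v).mpr h)
  have hn2 : ¬ ∀ x, ψ v x < ψ u x := fun h => h₂ ((hψ v u).mpr h)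
  push_neg at hn1 hn2
  obtain ⟨x₁, hx₁⟩ := hn1
  obtain ⟨x₂, hx₂⟩ := hn2
  obtain ⟨x, hx'⟩ := intermediate_value_univ₂ (ψ u).continuous (ψ v).continuous hx₂ hx₁
  refine ⟨(x, ψ u x), mem_reg_of_eq S φ ψ hψ hext u x, ?_⟩
  rw [hx']
  exact mem_reg_of_eq S φ ψ hψ hext v x
end

section
/- Let P be a finite poset with a partial representation φ: S → C([0,1],ℝ), where each φ(a) is piecewise linear. If for every pair of incomparable elements u, v of P the regions Reg(u) and Reg(v) intersect, then there exists a representation ψ of P by continuous functions [0,1] → ℝ extending φ. -/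
open Classical

/-- `f` is piecewise linear on `[0,1]`: there are breakpoints `0 = t 0 ≤ … ≤ t n = 1`
such that `f` is linear on each `[t i, t (i+1)]`. -/
def IsPWL (f : C(unitInterval, ℝ)) : Prop :=
  ∃ n : ℕ, ∃ t : Fin (n + 1) → unitInterval, Monotone t ∧ t 0 = 0 ∧ t (Fin.last n) = 1 ∧
    ∀ i : Fin n, ∃ a b : ℝ, ∀ x ∈ Set.Icc (t i.castSucc) (t i.succ), f x = a * (x : ℝ) + b

section AuxLemmas

variable {α : Type*}

lemma le_fold_max_of_mem {s : Finset α} {f : α → ℝ} {b : ℝ} {a : α} (ha : a ∈ s) :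
    f a ≤ s.fold max b f := by
  by_contra h
  push_neg at h
  exact absurd (((Finset.fold_max_lt (f a)).1 h).2 a ha) (lt_irrefl _)

lemma base_le_fold_max (s : Finset α) (f : α → ℝ) (b : ℝ) : b ≤ s.fold max b f := by
  by_contra h
  push_neg at h
  exact absurd ((Finset.fold_max_lt b).1 h).1 (lt_irrefl _)

lemma fold_min_le_of_mem {s : Finset α} {f : α → ℝ} {b : ℝ} {a : α} (ha : a ∈ s) :
    s.fold min b f ≤ f a := by
  by_contra h
  push_neg at h
  exact absurd (((Finset.lt_fold_min (f a)).1 h).2 a ha) (lt_irrefl _)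

lemma fold_min_le_base (s : Finset α) (f : α → ℝ) (b : ℝ) : s.fold min b f ≤ b := by
  by_contra h
  push_neg at h
  exact absurd ((Finset.lt_fold_min b).1 h).1 (lt_irrefl _)

lemma continuous_fold_max {X : Type*} [TopologicalSpace X] (s : Finset α) (b : ℝ)
    (f : α → X → ℝ) (hf : ∀ a, Continuous (f a)) :
    Continuous fun x => s.fold max b (fun a => f a x) := by
  induction s using Finset.cons_induction with
  | empty => simpa using continuous_const
  | cons a s ha ih =>
      have : (fun x => (Finset.cons a s ha).fold max b (fun c => f c x))
          = fun x => max (f a x) (s.fold max b (fun c => f c x)) := by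
        funext x; rw [Finset.fold_cons]
      rw [this]
      exact (hf a).max ih

lemma continuous_fold_min {X : Type*} [TopologicalSpace X] (s : Finset α) (b : ℝ)
    (f : α → X → ℝ) (hf : ∀ a, Continuous (f a)) :
    Continuous fun x => s.fold min b (fun a => f a x) := by
  induction s using Finset.cons_induction with
  | empty => simpa using continuous_const
  | cons a s ha ih =>
      have : (fun x => (Finset.cons a s ha).fold min b (fun c => f c x))
          = fun x => min (f a x) (s.fold min b (fun c => f c x)) := by
        funext x; rw [Finset.fold_cons]
      rw [this]
      exact (hf a).min ih

/-- affine interpolation comparison -/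
lemma affine_lt {l1 u1 l2 u2 s1 s2 : ℝ} (hl : l1 ≤ l2) (hu : u1 ≤ u2)
    (h10 : 0 ≤ s1) (h11 : s1 ≤ 1) (hs : s1 < s2) (hg : l2 < u2) :
    l1 + s1 * (u1 - l1) < l2 + s2 * (u2 - l2) := by
  nlinarith [mul_nonneg h10 (sub_nonneg.2 hu), mul_nonneg (sub_nonneg.2 h11) (sub_nonneg.2 hl),
    mul_pos (sub_pos.2 hs) (sub_pos.2 hg)]

/-- nonempty open subsets of the unit interval are infinite -/
lemma isOpen_unitInterval_infinite {X : Set unitInterval} (hX : IsOpen X) (hne : X.Nonempty) :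
    X.Infinite := by
  obtain ⟨z, hz⟩ := hne
  exact infinite_of_mem_nhds z (hX.mem_nhds hz)

/-- distinct representatives from infinite sets -/
lemma exists_injOn_mem {ι β : Type*} [Nonempty β] (t : Finset ι) (X : ι → Set β)
    (hX : ∀ k ∈ t, (X k).Infinite) :
    ∃ f : ι → β, (∀ k ∈ t, f k ∈ X k) ∧ Set.InjOn f t := by
  induction t using Finset.cons_induction with
  | empty => exact ⟨fun _ => Classical.arbitrary β, by simp, by simp⟩
  | cons a s ha ih =>
      obtain ⟨f, hf, hinj⟩ := ih (fun k hk => hX k (Finset.mem_cons_of_mem hk))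
      have h1 : (X a \ (f '' s)).Nonempty :=
        ((hX a (Finset.mem_cons_self _ _)).diff (s.finite_toSet.image f)).nonempty
      obtain ⟨v, hv⟩ := h1
      refine ⟨Function.update f a v, ?_, ?_⟩
      · intro k hk
        rcases Finset.mem_cons.1 hk with rfl | hk
        · simpa using hv.1
        · rw [Function.update_of_ne (ne_of_mem_of_not_mem hk ha)]
          exact hf k hk
      · intro x hx y hy hxy
        simp only [Finset.coe_cons, Set.mem_insert_iff] at hx hy
        rcases hx with rfl | hx
        · rcases hy with rfl | hy
          · rfl
          · exfalso
            rw [Function.update_self, Function.update_of_ne (ne_of_mem_of_not_mem hy ha)] at hxy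
            exact hv.2 ⟨y, hy, hxy.symm⟩
        · rcases hy with rfl | hy
          · exfalso
            rw [Function.update_self, Function.update_of_ne (ne_of_mem_of_not_mem hx ha)] at hxy
            exact hv.2 ⟨x, hx, hxy⟩
          · rw [Function.update_of_ne (ne_of_mem_of_not_mem hx ha),
              Function.update_of_ne (ne_of_mem_of_not_mem hy ha)] at hxy
            exact hinj hx hy hxy

end AuxLemmas
set_option linter.unusedSectionVars false

section Construction

variable {P : Type*} [Fintype P] [PartialOrder P]

/-- elements of `S` below `u` -/
noncomputable def lowF (S : Set P) (u : P) : Finset P :=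
  Finset.univ.filter (fun a => a ∈ S ∧ a < u)

/-- elements of `S` above `u` -/
noncomputable def highF (S : Set P) (u : P) : Finset P :=
  Finset.univ.filter (fun a => a ∈ S ∧ u < a)

/-- the (oriented) incomparable pairs needing a crossing point -/
noncomputable def KF (S : Set P) : Finset (P × P) :=
  Finset.univ.filter (fun q => ¬ q.1 < q.2 ∧ ¬ q.2 < q.1 ∧
    toLinearExtension q.1 < toLinearExtension q.2 ∧ (q.1 ∉ S ∨ q.2 ∉ S))

/-- lower envelope -/
noncomputable def Lf (S : Set P) (φ : P → C(unitInterval, ℝ)) (M : ℝ) (u : P)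
    (x : unitInterval) : ℝ :=
  (lowF S u).fold max (-M) (fun a => φ a x)

/-- upper envelope -/
noncomputable def Uf (S : Set P) (φ : P → C(unitInterval, ℝ)) (M : ℝ) (u : P)
    (x : unitInterval) : ℝ :=
  (highF S u).fold min M (fun a => φ a x)

/-- normalized rank in a linear extension, in (0,1) -/
noncomputable def tau (u : P) : ℝ :=
  ((Finset.univ.filter
      (fun z : P => toLinearExtension z ≤ toLinearExtension u)).card : ℝ) /
    (Fintype.card P + 1)

lemma mem_lowF {S : Set P} {u a : P} : a ∈ lowF S u ↔ a ∈ S ∧ a < u := by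
  simp [lowF]

lemma mem_highF {S : Set P} {u a : P} : a ∈ highF S u ↔ a ∈ S ∧ u < a := by
  simp [highF]

lemma mem_KF {S : Set P} {q : P × P} :
    q ∈ KF S ↔ ¬ q.1 < q.2 ∧ ¬ q.2 < q.1 ∧
      toLinearExtension q.1 < toLinearExtension q.2 ∧ (q.1 ∉ S ∨ q.2 ∉ S) := by
  simp [KF]

lemma KF_ne {S : Set P} {q : P × P} (hq : q ∈ KF S) : q.1 ≠ q.2 := by
  intro h
  have := (mem_KF.1 hq).2.2.1
  rw [h] at this
  exact lt_irrefl _ this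

lemma continuous_Lf (S : Set P) (φ : P → C(unitInterval, ℝ)) (M : ℝ) (u : P) :
    Continuous (Lf S φ M u) :=
  continuous_fold_max _ _ _ (fun a => (φ a).continuous)

lemma continuous_Uf (S : Set P) (φ : P → C(unitInterval, ℝ)) (M : ℝ) (u : P) :
    Continuous (Uf S φ M u) :=
  continuous_fold_min _ _ _ (fun a => (φ a).continuous)

lemma le_Lf {S : Set P} {φ : P → C(unitInterval, ℝ)} {M : ℝ} {u a : P}
    (ha : a ∈ S) (hau : a < u) (x : unitInterval) : φ a x ≤ Lf S φ M u x := by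
  unfold Lf; exact le_fold_max_of_mem (f := fun a => φ a x) (mem_lowF.2 ⟨ha, hau⟩)

lemma Uf_le {S : Set P} {φ : P → C(unitInterval, ℝ)} {M : ℝ} {u a : P}
    (ha : a ∈ S) (hau : u < a) (x : unitInterval) : Uf S φ M u x ≤ φ a x := by
  unfold Uf; exact fold_min_le_of_mem (f := fun a => φ a x) (mem_highF.2 ⟨ha, hau⟩)

lemma Lf_lt_iff {S : Set P} {φ : P → C(unitInterval, ℝ)} {M : ℝ} {u : P} {x : unitInterval}
    {c : ℝ} : Lf S φ M u x < c ↔ -M < c ∧ ∀ a ∈ S, a < u → φ a x < c := by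
  rw [Lf, Finset.fold_max_lt]
  constructor
  · rintro ⟨h1, h2⟩
    exact ⟨h1, fun a ha hau => h2 a (mem_lowF.2 ⟨ha, hau⟩)⟩
  · rintro ⟨h1, h2⟩
    exact ⟨h1, fun a ha => h2 a (mem_lowF.1 ha).1 (mem_lowF.1 ha).2⟩

lemma lt_Uf_iff {S : Set P} {φ : P → C(unitInterval, ℝ)} {M : ℝ} {u : P} {x : unitInterval}
    {c : ℝ} : c < Uf S φ M u x ↔ c < M ∧ ∀ a ∈ S, u < a → c < φ a x := by
  rw [Uf, Finset.lt_fold_min]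
  constructor
  · rintro ⟨h1, h2⟩
    exact ⟨h1, fun a ha hau => h2 a (mem_highF.2 ⟨ha, hau⟩)⟩
  · rintro ⟨h1, h2⟩
    exact ⟨h1, fun a ha => h2 a (mem_highF.1 ha).1 (mem_highF.1 ha).2⟩

lemma toLinearExtension_inj {u v : P}
    (h : toLinearExtension u = toLinearExtension v) : u = v := h

lemma Lf_lt_Uf {S : Set P} {φ : P → C(unitInterval, ℝ)} {M : ℝ} {u : P} {x : unitInterval}
    (hM0 : 0 < M) (hM : ∀ a (x : unitInterval), |φ a x| < M)
    (hφ : ∀ a ∈ S, ∀ b ∈ S, (a < b ↔ ∀ x, φ a x < φ b x)) :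
    Lf S φ M u x < Uf S φ M u x := by
  rw [lt_Uf_iff]
  constructor
  · exact Lf_lt_iff.2 ⟨by linarith, fun a _ _ =>
      lt_of_le_of_lt (le_abs_self _) (hM a x)⟩
  · intro b hb hub
    refine Lf_lt_iff.2 ⟨?_, fun a ha hau => (hφ a ha b hb).1 (lt_trans hau hub) x⟩
    have := abs_lt.1 (hM b x)
    linarith [this.1]

lemma tau_pos (u : P) : 0 < tau u := by
  apply div_pos
  · have : u ∈ Finset.univ.filter
        (fun z : P => toLinearExtension z ≤ toLinearExtension u) := by simp
    have := Finset.card_pos.2 ⟨u, this⟩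
    exact_mod_cast this
  · positivity

lemma tau_lt_one (u : P) : tau u < 1 := by
  rw [tau, div_lt_one (by positivity)]
  have h := Finset.card_filter_le Finset.univ
      (fun z : P => toLinearExtension z ≤ toLinearExtension u)
  rw [Finset.card_univ] at h
  have : ((Finset.univ.filter
      (fun z : P => toLinearExtension z ≤ toLinearExtension u)).card : ℝ) ≤ Fintype.card P := by
    exact_mod_cast h
  linarith

lemma tau_strictMono {u v : P} (h : u < v) : tau u < tau v := by
  have hsub : (Finset.univ.filter
      (fun z : P => toLinearExtension z ≤ toLinearExtension u)) ⊂
      (Finset.univ.filter (fun z : P => toLinearExtension z ≤ toLinearExtension v)) := by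
    constructor
    · intro z hz
      simp only [Finset.mem_filter, Finset.mem_univ, true_and] at *
      exact le_trans hz (toLinearExtension.monotone h.le)
    · intro hsub
      have hv : v ∈ Finset.univ.filter
          (fun z : P => toLinearExtension z ≤ toLinearExtension v) := by simp
      have h1 := hsub hv
      simp only [Finset.mem_filter, Finset.mem_univ, true_and] at h1
      have h2 := toLinearExtension.monotone h.le
      exact absurd (toLinearExtension_inj (le_antisymm h1 h2)) h.ne'
  have hc := Finset.card_lt_card hsub
  rw [tau, tau, div_lt_div_iff₀ (by positivity) (by positivity)]
  have : ((Finset.univ.filter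
      (fun z : P => toLinearExtension z ≤ toLinearExtension u)).card : ℝ) <
      ((Finset.univ.filter
      (fun z : P => toLinearExtension z ≤ toLinearExtension v)).card : ℝ) := by
    exact_mod_cast hc
  nlinarith [this]

end Construction
section Columns

variable {P : Type*} [Fintype P] [PartialOrder P]

lemma Lf_mono {S : Set P} {φ : P → C(unitInterval, ℝ)} {M : ℝ} {u v : P} (h : u < v)
    (x : unitInterval) : Lf S φ M u x ≤ Lf S φ M v x := by
  unfold Lf
  rw [Finset.fold_max_le]
  refine ⟨base_le_fold_max _ _ _, fun a ha => ?_⟩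
  exact le_Lf (mem_lowF.1 ha).1 (lt_trans (mem_lowF.1 ha).2 h) x

lemma Uf_mono {S : Set P} {φ : P → C(unitInterval, ℝ)} {M : ℝ} {u v : P} (h : u < v)
    (x : unitInterval) : Uf S φ M u x ≤ Uf S φ M v x := by
  conv_rhs => rw [Uf]
  rw [Finset.le_fold_min]
  refine ⟨fold_min_le_base _ _ _, fun a ha => ?_⟩
  exact Uf_le (mem_highF.1 ha).1 (lt_trans h (mem_highF.1 ha).2) x

/-- normalized height of the point `yc k` inside the strip of `p` -/
noncomputable def sigv (S : Set P) (φ : P → C(unitInterval, ℝ)) (M : ℝ)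
    (xc : P × P → unitInterval) (yc : P × P → ℝ) (p : P) (k : P × P) : ℝ :=
  (yc k - Lf S φ M p (xc k)) / (Uf S φ M p (xc k) - Lf S φ M p (xc k))

lemma sig_bounds {S : Set P} {φ : P → C(unitInterval, ℝ)} {M : ℝ}
    {xc : P × P → unitInterval} {yc : P × P → ℝ} {k : P × P} {p : P}
    (hM0 : 0 < M) (hM : ∀ a (x : unitInterval), |φ a x| < M)
    (hMy : ∀ k ∈ KF S, |yc k| < M)
    (hxy : ∀ k ∈ KF S, (xc k, yc k) ∈ Reg S φ k.1 ∩ Reg S φ k.2)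
    (hk : k ∈ KF S) (hp : p = k.1 ∨ p = k.2) (hpS : p ∉ S) :
    Lf S φ M p (xc k) < yc k ∧ yc k < Uf S φ M p (xc k) ∧
      0 < sigv S φ M xc yc p k ∧ sigv S φ M xc yc p k < 1 := by
  have hmem : (xc k, yc k) ∈ Reg S φ p := by
    rcases hp with rfl | rfl
    · exact (hxy k hk).1
    · exact (hxy k hk).2
  rw [Reg, if_neg hpS] at hmem
  obtain ⟨h1, h2⟩ := hmem
  have hy := abs_lt.1 (hMy k hk)
  have hL : Lf S φ M p (xc k) < yc k :=
    Lf_lt_iff.2 ⟨hy.1, fun a ha hau => h2 a ha hau⟩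
  have hU : yc k < Uf S φ M p (xc k) :=
    lt_Uf_iff.2 ⟨hy.2, fun a ha hau => h1 a ha hau⟩
  refine ⟨hL, hU, div_pos (by linarith) (by linarith), (div_lt_one (by linarith)).2 (by linarith)⟩

/-- lower pin bound at column `k` for element `w` -/
noncomputable def colL (S : Set P) (φ : P → C(unitInterval, ℝ)) (M : ℝ)
    (xc : P × P → unitInterval) (yc : P × P → ℝ) (k : P × P) (w : P) : ℝ :=
  max (if k.1 ∉ S ∧ k.1 < w then sigv S φ M xc yc k.1 k else 0)
      (if k.2 ∉ S ∧ k.2 < w then sigv S φ M xc yc k.2 k else 0)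

/-- upper pin bound at column `k` for element `w` -/
noncomputable def colH (S : Set P) (φ : P → C(unitInterval, ℝ)) (M : ℝ)
    (xc : P × P → unitInterval) (yc : P × P → ℝ) (k : P × P) (w : P) : ℝ :=
  min (if k.1 ∉ S ∧ w < k.1 then sigv S φ M xc yc k.1 k else 1)
      (if k.2 ∉ S ∧ w < k.2 then sigv S φ M xc yc k.2 k else 1)

/-- the value of element `w` at column `k` (normalized coordinates) -/
noncomputable def colF (S : Set P) (φ : P → C(unitInterval, ℝ)) (M : ℝ)
    (xc : P × P → unitInterval) (yc : P × P → ℝ) (k : P × P) (w : P) : ℝ :=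
  if (w = k.1 ∨ w = k.2) ∧ w ∉ S then sigv S φ M xc yc w k
  else colL S φ M xc yc k w + tau w * (colH S φ M xc yc k w - colL S φ M xc yc k w)

section ColFacts

variable {S : Set P} {φ : P → C(unitInterval, ℝ)} {M : ℝ}
  {xc : P × P → unitInterval} {yc : P × P → ℝ} {k : P × P} {w w' : P}

lemma colL_nonneg
    (hM0 : 0 < M) (hM : ∀ a (x : unitInterval), |φ a x| < M)
    (hMy : ∀ k ∈ KF S, |yc k| < M)
    (hxy : ∀ k ∈ KF S, (xc k, yc k) ∈ Reg S φ k.1 ∩ Reg S φ k.2)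
    (hk : k ∈ KF S) : 0 ≤ colL S φ M xc yc k w := by
  refine le_trans ?_ (le_max_left _ _)
  split_ifs with h
  · exact (sig_bounds hM0 hM hMy hxy hk (Or.inl rfl) h.1).2.2.1.le
  · exact le_refl 0

lemma colH_le_one
    (hM0 : 0 < M) (hM : ∀ a (x : unitInterval), |φ a x| < M)
    (hMy : ∀ k ∈ KF S, |yc k| < M)
    (hxy : ∀ k ∈ KF S, (xc k, yc k) ∈ Reg S φ k.1 ∩ Reg S φ k.2)
    (hk : k ∈ KF S) : colH S φ M xc yc k w ≤ 1 := by
  refine le_trans (min_le_left _ _) ?_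
  split_ifs with h
  · exact (sig_bounds hM0 hM hMy hxy hk (Or.inl rfl) h.1).2.2.2.le
  · exact le_refl 1

lemma colL_lt_colH
    (hM0 : 0 < M) (hM : ∀ a (x : unitInterval), |φ a x| < M)
    (hMy : ∀ k ∈ KF S, |yc k| < M)
    (hxy : ∀ k ∈ KF S, (xc k, yc k) ∈ Reg S φ k.1 ∩ Reg S φ k.2)
    (hk : k ∈ KF S) : colL S φ M xc yc k w < colH S φ M xc yc k w := by
  have h21 : ¬ k.2 < k.1 := (mem_KF.1 hk).2.1
  have h12 : ¬ k.1 < k.2 := (mem_KF.1 hk).1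
  rw [colH, lt_min_iff]
  constructor
  · split_ifs with h
    · -- upper pin k.1 active; show colL < sigv k.1
      rw [colL, max_lt_iff]
      constructor
      · rw [if_neg (fun hc => absurd (lt_trans h.2 hc.2) (lt_irrefl _))]
        exact (sig_bounds hM0 hM hMy hxy hk (Or.inl rfl) h.1).2.2.1
      · rw [if_neg (fun hc => h21 (lt_trans hc.2 h.2))]
        exact (sig_bounds hM0 hM hMy hxy hk (Or.inl rfl) h.1).2.2.1
    · rw [colL, max_lt_iff]
      constructor
      · split_ifs with h'
        · exact (sig_bounds hM0 hM hMy hxy hk (Or.inl rfl) h'.1).2.2.2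
        · exact one_pos
      · split_ifs with h'
        · exact (sig_bounds hM0 hM hMy hxy hk (Or.inr rfl) h'.1).2.2.2
        · exact one_pos
  · split_ifs with h
    · rw [colL, max_lt_iff]
      constructor
      · rw [if_neg (fun hc => h12 (lt_trans hc.2 h.2))]
        exact (sig_bounds hM0 hM hMy hxy hk (Or.inr rfl) h.1).2.2.1
      · rw [if_neg (fun hc => absurd (lt_trans h.2 hc.2) (lt_irrefl _))]
        exact (sig_bounds hM0 hM hMy hxy hk (Or.inr rfl) h.1).2.2.1
    · rw [colL, max_lt_iff]
      constructor
      · split_ifs with h'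
        · exact (sig_bounds hM0 hM hMy hxy hk (Or.inl rfl) h'.1).2.2.2
        · exact one_pos
      · split_ifs with h'
        · exact (sig_bounds hM0 hM hMy hxy hk (Or.inr rfl) h'.1).2.2.2
        · exact one_pos

lemma colL_mono
    (hM0 : 0 < M) (hM : ∀ a (x : unitInterval), |φ a x| < M)
    (hMy : ∀ k ∈ KF S, |yc k| < M)
    (hxy : ∀ k ∈ KF S, (xc k, yc k) ∈ Reg S φ k.1 ∩ Reg S φ k.2)
    (hk : k ∈ KF S) (h : w < w') : colL S φ M xc yc k w ≤ colL S φ M xc yc k w' := by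
  rw [colL, max_le_iff]
  constructor
  · split_ifs with h1
    · conv_rhs => rw [colL]
      rw [if_pos ⟨h1.1, lt_trans h1.2 h⟩]
      exact le_max_left _ _
    · exact colL_nonneg hM0 hM hMy hxy hk
  · split_ifs with h1
    · conv_rhs => rw [colL]
      rw [if_pos (show k.2 ∉ S ∧ k.2 < w' from ⟨h1.1, lt_trans h1.2 h⟩)]
      exact le_max_right _ _
    · exact colL_nonneg hM0 hM hMy hxy hk

lemma colH_mono
    (hM0 : 0 < M) (hM : ∀ a (x : unitInterval), |φ a x| < M)
    (hMy : ∀ k ∈ KF S, |yc k| < M)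
    (hxy : ∀ k ∈ KF S, (xc k, yc k) ∈ Reg S φ k.1 ∩ Reg S φ k.2)
    (hk : k ∈ KF S) (h : w < w') : colH S φ M xc yc k w ≤ colH S φ M xc yc k w' := by
  conv_rhs => rw [colH]
  rw [le_min_iff]
  constructor
  · split_ifs with h1
    · conv_lhs => rw [colH]
      rw [if_pos ⟨h1.1, lt_trans h h1.2⟩]
      exact min_le_left _ _
    · exact colH_le_one hM0 hM hMy hxy hk
  · split_ifs with h1
    · conv_lhs => rw [colH]
      rw [if_pos (show k.2 ∉ S ∧ w < k.2 from ⟨h1.1, lt_trans h h1.2⟩)]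
      exact min_le_right _ _
    · exact colH_le_one hM0 hM hMy hxy hk

lemma colF_pinned (hp : w = k.1 ∨ w = k.2) (hw : w ∉ S) :
    colF S φ M xc yc k w = sigv S φ M xc yc w k := if_pos ⟨hp, hw⟩

lemma colF_bounds
    (hM0 : 0 < M) (hM : ∀ a (x : unitInterval), |φ a x| < M)
    (hMy : ∀ k ∈ KF S, |yc k| < M)
    (hxy : ∀ k ∈ KF S, (xc k, yc k) ∈ Reg S φ k.1 ∩ Reg S φ k.2)
    (hk : k ∈ KF S) (hw : w ∉ S) :
    0 < colF S φ M xc yc k w ∧ colF S φ M xc yc k w < 1 := by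
  rw [colF]
  split_ifs with h
  · exact ⟨(sig_bounds hM0 hM hMy hxy hk h.1 hw).2.2.1,
      (sig_bounds hM0 hM hMy hxy hk h.1 hw).2.2.2⟩
  · have hL := colL_nonneg (w := w) hM0 hM hMy hxy hk
    have hH := colH_le_one (w := w) hM0 hM hMy hxy hk
    have hLH := colL_lt_colH (w := w) hM0 hM hMy hxy hk
    have ht0 := tau_pos w
    have ht1 := tau_lt_one w
    constructor
    · nlinarith
    · nlinarith

lemma colF_strictMono
    (hM0 : 0 < M) (hM : ∀ a (x : unitInterval), |φ a x| < M)
    (hMy : ∀ k ∈ KF S, |yc k| < M)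
    (hxy : ∀ k ∈ KF S, (xc k, yc k) ∈ Reg S φ k.1 ∩ Reg S φ k.2)
    (hk : k ∈ KF S) (hw : w ∉ S) (hw' : w' ∉ S) (h : w < w') :
    colF S φ M xc yc k w < colF S φ M xc yc k w' := by
  rw [colF, colF]
  split_ifs with h1 h2 h2
  · -- both pinned : impossible
    exfalso
    have h21 : ¬ k.2 < k.1 := (mem_KF.1 hk).2.1
    have h12 : ¬ k.1 < k.2 := (mem_KF.1 hk).1
    rcases h1.1 with rfl | rfl <;> rcases h2.1 with heq | heq
    · rw [heq] at h; exact lt_irrefl _ h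
    · rw [heq] at h; exact h12 h
    · rw [heq] at h; exact h21 h
    · rw [heq] at h; exact lt_irrefl _ h
  · -- w pinned, w' not
    have hL' : sigv S φ M xc yc w k ≤ colL S φ M xc yc k w' := by
      rcases h1.1 with hp | hp
      · rw [colL, if_pos (show k.1 ∉ S ∧ k.1 < w' from ⟨hp ▸ hw, hp ▸ h⟩), hp]
        exact le_max_left _ _
      · rw [colL, if_pos (show k.2 ∉ S ∧ k.2 < w' from ⟨hp ▸ hw, hp ▸ h⟩), hp]
        exact le_max_right _ _
    have hLH := colL_lt_colH (w := w') hM0 hM hMy hxy hk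
    have ht0 := tau_pos w'
    have := mul_pos ht0 (sub_pos.2 hLH)
    linarith
  · -- w' pinned, w not
    have hH : colH S φ M xc yc k w ≤ sigv S φ M xc yc w' k := by
      rcases h2.1 with hp | hp
      · rw [colH, if_pos (show k.1 ∉ S ∧ w < k.1 from ⟨hp ▸ hw', hp ▸ h⟩), hp]
        exact min_le_left _ _
      · rw [colH, if_pos (show k.2 ∉ S ∧ w < k.2 from ⟨hp ▸ hw', hp ▸ h⟩), hp]
        exact min_le_right _ _
    have hLH := colL_lt_colH (w := w) hM0 hM hMy hxy hk
    have ht1 := tau_lt_one w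
    have := mul_pos (sub_pos.2 ht1) (sub_pos.2 hLH)
    nlinarith
  · -- neither pinned
    exact affine_lt (colL_mono hM0 hM hMy hxy hk h) (colH_mono hM0 hM hMy hxy hk h)
      (tau_pos w).le (tau_lt_one w).le (tau_strictMono h)
      (colL_lt_colH hM0 hM hMy hxy hk)

end ColFacts

end Columns
section Weights

variable {P : Type*} [Fintype P] [PartialOrder P]

/-- Lagrange-style weight of pin `k` -/
noncomputable def gw (S : Set P) (xc : P × P → unitInterval) (k : P × P)
    (x : unitInterval) : ℝ :=
  ∏ j ∈ (KF S).erase k, |(x : ℝ) - (xc j : ℝ)|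

/-- weight of the default column -/
noncomputable def ginf (S : Set P) (xc : P × P → unitInterval) (x : unitInterval) : ℝ :=
  ∏ j ∈ KF S, |(x : ℝ) - (xc j : ℝ)|

/-- total weight -/
noncomputable def Wt (S : Set P) (xc : P × P → unitInterval) (x : unitInterval) : ℝ :=
  ginf S xc x + ∑ k ∈ KF S, gw S xc k x

lemma gw_nonneg (S : Set P) (xc : P × P → unitInterval) (k : P × P) (x : unitInterval) :
    0 ≤ gw S xc k x :=
  Finset.prod_nonneg fun _ _ => abs_nonneg _

lemma ginf_nonneg (S : Set P) (xc : P × P → unitInterval) (x : unitInterval) :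
    0 ≤ ginf S xc x :=
  Finset.prod_nonneg fun _ _ => abs_nonneg _

lemma continuous_gw (S : Set P) (xc : P × P → unitInterval) (k : P × P) :
    Continuous (gw S xc k) :=
  continuous_finset_prod _ fun j _ => (continuous_subtype_val.sub continuous_const).abs

lemma continuous_ginf (S : Set P) (xc : P × P → unitInterval) :
    Continuous (ginf S xc) :=
  continuous_finset_prod _ fun j _ => (continuous_subtype_val.sub continuous_const).abs

lemma continuous_Wt (S : Set P) (xc : P × P → unitInterval) : Continuous (Wt S xc) :=
  (continuous_ginf S xc).add (continuous_finset_sum _ fun k _ => continuous_gw S xc k)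

lemma gw_pos_at {S : Set P} {xc : P × P → unitInterval} (hinj : Set.InjOn xc (KF S))
    {k : P × P} (hk : k ∈ KF S) : 0 < gw S xc k (xc k) := by
  apply Finset.prod_pos
  intro j hj
  rw [abs_pos, sub_ne_zero]
  intro hc
  exact (Finset.mem_erase.1 hj).1
    (hinj (Finset.mem_erase.1 hj).2 hk (Subtype.ext hc.symm) ▸ rfl)

lemma gw_eval_zero {S : Set P} {xc : P × P → unitInterval} {k j : P × P}
    (hk : k ∈ KF S) (hj : j ≠ k) : gw S xc j (xc k) = 0 := by
  apply Finset.prod_eq_zero (Finset.mem_erase.2 ⟨hj.symm, hk⟩)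
  simp

lemma ginf_eval_zero {S : Set P} {xc : P × P → unitInterval} {k : P × P}
    (hk : k ∈ KF S) : ginf S xc (xc k) = 0 := by
  apply Finset.prod_eq_zero hk
  simp

lemma Wt_pos {S : Set P} {xc : P × P → unitInterval} (hinj : Set.InjOn xc (KF S))
    (x : unitInterval) : 0 < Wt S xc x := by
  by_cases hx : ∀ j ∈ KF S, (x : ℝ) ≠ (xc j : ℝ)
  · have h1 : 0 < ginf S xc x :=
      Finset.prod_pos fun j hj => abs_pos.2 (sub_ne_zero.2 (hx j hj))
    have h2 : 0 ≤ ∑ k ∈ KF S, gw S xc k x :=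
      Finset.sum_nonneg fun k _ => gw_nonneg S xc k x
    rw [Wt]; linarith
  · push_neg at hx
    obtain ⟨j, hj, hxj⟩ := hx
    have hxeq : x = xc j := Subtype.ext hxj
    have h1 : 0 < gw S xc j x := hxeq ▸ gw_pos_at hinj hj
    have h2 : gw S xc j x ≤ ∑ k ∈ KF S, gw S xc k x :=
      Finset.single_le_sum (fun k _ => gw_nonneg S xc k x) hj
    have h3 : 0 ≤ ginf S xc x := ginf_nonneg S xc x
    rw [Wt]; linarith

/-- the normalized height function of `u` -/
noncomputable def sfun (S : Set P) (φ : P → C(unitInterval, ℝ)) (M : ℝ)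
    (xc : P × P → unitInterval) (yc : P × P → ℝ) (u : P) (x : unitInterval) : ℝ :=
  (ginf S xc x * tau u + ∑ k ∈ KF S, gw S xc k x * colF S φ M xc yc k u) / Wt S xc x

lemma continuous_sfun (S : Set P) (φ : P → C(unitInterval, ℝ)) (M : ℝ)
    (xc : P × P → unitInterval) (yc : P × P → ℝ) (u : P) (hinj : Set.InjOn xc (KF S)) :
    Continuous (sfun S φ M xc yc u) := by
  apply Continuous.div
  · exact ((continuous_ginf S xc).mul continuous_const).add
      (continuous_finset_sum _ fun k _ => (continuous_gw S xc k).mul continuous_const)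
  · exact continuous_Wt S xc
  · exact fun x => (Wt_pos hinj x).ne'

lemma sfun_at_pin {S : Set P} {φ : P → C(unitInterval, ℝ)} {M : ℝ}
    {xc : P × P → unitInterval} {yc : P × P → ℝ} {k : P × P}
    (hinj : Set.InjOn xc (KF S)) (hk : k ∈ KF S) (u : P) :
    sfun S φ M xc yc u (xc k) = colF S φ M xc yc k u := by
  have hnum : ∑ j ∈ KF S, gw S xc j (xc k) * colF S φ M xc yc j u
      = gw S xc k (xc k) * colF S φ M xc yc k u := by
    apply Finset.sum_eq_single k
    · intro j hj hne
      rw [gw_eval_zero hk hne, zero_mul]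
    · intro hke; exact absurd hk hke
  have hden : ∑ j ∈ KF S, gw S xc j (xc k) = gw S xc k (xc k) := by
    apply Finset.sum_eq_single k
    · intro j hj hne
      exact gw_eval_zero hk hne
    · intro hke; exact absurd hk hke
  rw [sfun, Wt, hnum, hden, ginf_eval_zero hk, zero_mul, zero_add, zero_add,
    mul_comm, mul_div_assoc, div_self (gw_pos_at hinj hk).ne', mul_one]

/-- convex-combination comparison -/
lemma combo_lt {ι : Type*} (s : Finset ι) (a : ℝ) (c : ι → ℝ) (t1 t2 : ℝ) (v1 v2 : ι → ℝ)
    (ha : 0 ≤ a) (hc : ∀ i ∈ s, 0 ≤ c i) (hpos : 0 < a + ∑ i ∈ s, c i)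
    (ht : t1 < t2) (hv : ∀ i ∈ s, v1 i < v2 i) :
    a * t1 + ∑ i ∈ s, c i * v1 i < a * t2 + ∑ i ∈ s, c i * v2 i := by
  have key : 0 < a * (t2 - t1) + ∑ i ∈ s, c i * (v2 i - v1 i) := by
    rcases eq_or_lt_of_le ha with ha0 | ha0
    · have hs : 0 < ∑ i ∈ s, c i := by rw [← ha0] at hpos; linarith
      have : ∃ i ∈ s, 0 < c i := by
        by_contra hno
        push_neg at hno
        have : ∑ i ∈ s, c i ≤ 0 :=
          Finset.sum_nonpos fun i hi => hno i hi
        linarith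
      obtain ⟨i, hi, hci⟩ := this
      have h1 : 0 < c i * (v2 i - v1 i) := mul_pos hci (sub_pos.2 (hv i hi))
      have h2 : c i * (v2 i - v1 i) ≤ ∑ j ∈ s, c j * (v2 j - v1 j) :=
        Finset.single_le_sum
          (fun j hj => mul_nonneg (hc j hj) (sub_nonneg.2 (hv j hj).le)) hi
      have h3 : 0 ≤ a * (t2 - t1) := mul_nonneg ha (sub_nonneg.2 ht.le)
      linarith
    · have h1 : 0 < a * (t2 - t1) := mul_pos ha0 (sub_pos.2 ht)
      have h2 : 0 ≤ ∑ j ∈ s, c j * (v2 j - v1 j) :=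
        Finset.sum_nonneg fun j hj => mul_nonneg (hc j hj) (sub_nonneg.2 (hv j hj).le)
      linarith
  have e1 : ∑ i ∈ s, c i * (v2 i - v1 i)
      = ∑ i ∈ s, c i * v2 i - ∑ i ∈ s, c i * v1 i := by
    rw [← Finset.sum_sub_distrib]
    exact Finset.sum_congr rfl fun i _ => by ring
  have e2 : a * (t2 - t1) = a * t2 - a * t1 := by ring
  rw [e1, e2] at key
  linarith

end Weights
section Psi

variable {P : Type*} [Fintype P] [PartialOrder P]
variable {S : Set P} {φ : P → C(unitInterval, ℝ)} {M : ℝ}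
  {xc : P × P → unitInterval} {yc : P × P → ℝ}

lemma sfun_bounds
    (hinj : Set.InjOn xc (KF S)) (hM0 : 0 < M)
    (hM : ∀ a (x : unitInterval), |φ a x| < M)
    (hMy : ∀ k ∈ KF S, |yc k| < M)
    (hxy : ∀ k ∈ KF S, (xc k, yc k) ∈ Reg S φ k.1 ∩ Reg S φ k.2)
    {u : P} (hu : u ∉ S) (x : unitInterval) :
    0 < sfun S φ M xc yc u x ∧ sfun S φ M xc yc u x < 1 := by
  have hW := Wt_pos hinj x
  have hWdef : Wt S xc x = ginf S xc x + ∑ k ∈ KF S, gw S xc k x := rfl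
  have hnum_pos : 0 < ginf S xc x * tau u +
      ∑ k ∈ KF S, gw S xc k x * colF S φ M xc yc k u := by
    have := combo_lt (KF S) (ginf S xc x) (fun k => gw S xc k x) 0 (tau u)
      (fun _ => 0) (fun k => colF S φ M xc yc k u) (ginf_nonneg S xc x)
      (fun k _ => gw_nonneg S xc k x) (by rw [← hWdef]; exact hW) (tau_pos u)
      (fun k hk => (colF_bounds hM0 hM hMy hxy hk hu).1)
    simpa using this
  have hnum_lt : ginf S xc x * tau u +
      ∑ k ∈ KF S, gw S xc k x * colF S φ M xc yc k u < Wt S xc x := by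
    have := combo_lt (KF S) (ginf S xc x) (fun k => gw S xc k x) (tau u) 1
      (fun k => colF S φ M xc yc k u) (fun _ => 1) (ginf_nonneg S xc x)
      (fun k _ => gw_nonneg S xc k x) (by rw [← hWdef]; exact hW) (tau_lt_one u)
      (fun k hk => (colF_bounds hM0 hM hMy hxy hk hu).2)
    simpa [hWdef] using this
  exact ⟨div_pos hnum_pos hW, (div_lt_one hW).2 hnum_lt⟩

lemma sfun_mono
    (hinj : Set.InjOn xc (KF S)) (hM0 : 0 < M)
    (hM : ∀ a (x : unitInterval), |φ a x| < M)
    (hMy : ∀ k ∈ KF S, |yc k| < M)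
    (hxy : ∀ k ∈ KF S, (xc k, yc k) ∈ Reg S φ k.1 ∩ Reg S φ k.2)
    {u v : P} (hu : u ∉ S) (hv : v ∉ S) (huv : u < v) (x : unitInterval) :
    sfun S φ M xc yc u x < sfun S φ M xc yc v x := by
  have hW := Wt_pos hinj x
  have hWdef : Wt S xc x = ginf S xc x + ∑ k ∈ KF S, gw S xc k x := rfl
  have hnum : ginf S xc x * tau u + ∑ k ∈ KF S, gw S xc k x * colF S φ M xc yc k u <
      ginf S xc x * tau v + ∑ k ∈ KF S, gw S xc k x * colF S φ M xc yc k v :=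
    combo_lt (KF S) (ginf S xc x) (fun k => gw S xc k x) (tau u) (tau v)
      (fun k => colF S φ M xc yc k u) (fun k => colF S φ M xc yc k v)
      (ginf_nonneg S xc x) (fun k _ => gw_nonneg S xc k x)
      (by rw [← hWdef]; exact hW) (tau_strictMono huv)
      (fun k hk => colF_strictMono hM0 hM hMy hxy hk hu hv huv)
  rw [sfun, sfun, div_lt_div_iff₀ hW hW]
  exact mul_lt_mul_of_pos_right hnum hW

/-- the function representing `u ∉ S` -/
noncomputable def psifun (S : Set P) (φ : P → C(unitInterval, ℝ)) (M : ℝ)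
    (xc : P × P → unitInterval) (yc : P × P → ℝ) (u : P) (x : unitInterval) : ℝ :=
  Lf S φ M u x + sfun S φ M xc yc u x * (Uf S φ M u x - Lf S φ M u x)

lemma continuous_psifun (hinj : Set.InjOn xc (KF S)) (u : P) :
    Continuous (psifun S φ M xc yc u) :=
  (continuous_Lf S φ M u).add ((continuous_sfun S φ M xc yc u hinj).mul
    ((continuous_Uf S φ M u).sub (continuous_Lf S φ M u)))

lemma psifun_between
    (hinj : Set.InjOn xc (KF S)) (hM0 : 0 < M)
    (hM : ∀ a (x : unitInterval), |φ a x| < M)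
    (hMy : ∀ k ∈ KF S, |yc k| < M)
    (hxy : ∀ k ∈ KF S, (xc k, yc k) ∈ Reg S φ k.1 ∩ Reg S φ k.2)
    (hφ : ∀ a ∈ S, ∀ b ∈ S, (a < b ↔ ∀ x, φ a x < φ b x))
    {u : P} (hu : u ∉ S) (x : unitInterval) :
    Lf S φ M u x < psifun S φ M xc yc u x ∧ psifun S φ M xc yc u x < Uf S φ M u x := by
  have hG := Lf_lt_Uf (u := u) (x := x) hM0 hM hφ
  have hs := sfun_bounds hinj hM0 hM hMy hxy hu x
  rw [psifun]
  constructor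
  · nlinarith [hs.1, hG]
  · nlinarith [hs.2, hG]

lemma psifun_mono
    (hinj : Set.InjOn xc (KF S)) (hM0 : 0 < M)
    (hM : ∀ a (x : unitInterval), |φ a x| < M)
    (hMy : ∀ k ∈ KF S, |yc k| < M)
    (hxy : ∀ k ∈ KF S, (xc k, yc k) ∈ Reg S φ k.1 ∩ Reg S φ k.2)
    (hφ : ∀ a ∈ S, ∀ b ∈ S, (a < b ↔ ∀ x, φ a x < φ b x))
    {u v : P} (hu : u ∉ S) (hv : v ∉ S) (huv : u < v) (x : unitInterval) :
    psifun S φ M xc yc u x < psifun S φ M xc yc v x := by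
  have hs := sfun_bounds hinj hM0 hM hMy hxy hu x
  exact affine_lt (Lf_mono huv x) (Uf_mono huv x) hs.1.le hs.2.le
    (sfun_mono hinj hM0 hM hMy hxy hu hv huv x)
    (Lf_lt_Uf hM0 hM hφ)

lemma psifun_at_pin
    (hinj : Set.InjOn xc (KF S)) (hM0 : 0 < M)
    (hM : ∀ a (x : unitInterval), |φ a x| < M)
    (hMy : ∀ k ∈ KF S, |yc k| < M)
    (hxy : ∀ k ∈ KF S, (xc k, yc k) ∈ Reg S φ k.1 ∩ Reg S φ k.2)
    {k : P × P} (hk : k ∈ KF S) {p : P} (hp : p = k.1 ∨ p = k.2) (hpS : p ∉ S) :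
    psifun S φ M xc yc p (xc k) = yc k := by
  have hb := sig_bounds hM0 hM hMy hxy hk hp hpS
  have hG : Uf S φ M p (xc k) - Lf S φ M p (xc k) ≠ 0 := by
    have := lt_trans hb.1 hb.2.1
    intro h; linarith [sub_eq_zero.1 h]
  rw [psifun, sfun_at_pin hinj hk, colF_pinned hp hpS, sigv, div_mul_cancel₀ _ hG]
  ring
end Psi
section Final

variable {P : Type*} [Fintype P] [PartialOrder P]

lemma isOpen_Reg {S : Set P} {φ : P → C(unitInterval, ℝ)} {u : P} (hu : u ∉ S) :
    IsOpen (Reg S φ u) := by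
  rw [Reg, if_neg hu]
  have hset : {p : unitInterval × ℝ |
      (∀ a ∈ S, u < a → p.2 < φ a p.1) ∧ ∀ a ∈ S, a < u → φ a p.1 < p.2}
      = (⋂ a ∈ S, {p : unitInterval × ℝ | u < a → p.2 < φ a p.1}) ∩
        (⋂ a ∈ S, {p : unitInterval × ℝ | a < u → φ a p.1 < p.2}) := by
    ext p
    simp [Set.mem_iInter]
  rw [hset]
  apply IsOpen.inter
  · apply Set.Finite.isOpen_biInter (Set.toFinite S)
    intro a _
    by_cases hua : u < a
    · have : {p : unitInterval × ℝ | u < a → p.2 < φ a p.1}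
          = {p : unitInterval × ℝ | p.2 < φ a p.1} := by ext p; simp [hua]
      rw [this]
      exact isOpen_lt continuous_snd ((φ a).continuous.comp continuous_fst)
    · have : {p : unitInterval × ℝ | u < a → p.2 < φ a p.1} = Set.univ := by
        ext p; simp [hua]
      rw [this]; exact isOpen_univ
  · apply Set.Finite.isOpen_biInter (Set.toFinite S)
    intro a _
    by_cases hua : a < u
    · have : {p : unitInterval × ℝ | a < u → φ a p.1 < p.2}
          = {p : unitInterval × ℝ | φ a p.1 < p.2} := by ext p; simp [hua]
      rw [this]
      exact isOpen_lt ((φ a).continuous.comp continuous_fst) continuous_snd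
    · have : {p : unitInterval × ℝ | a < u → φ a p.1 < p.2} = Set.univ := by
        ext p; simp [hua]
      rw [this]; exact isOpen_univ

lemma Xset_infinite {S : Set P} {φ : P → C(unitInterval, ℝ)}
    (hreg : ∀ u v : P, u ≠ v → ¬ u < v → ¬ v < u → (Reg S φ u ∩ Reg S φ v).Nonempty)
    {k : P × P} (hk : k ∈ KF S) :
    {x : unitInterval | ∃ y : ℝ, (x, y) ∈ Reg S φ k.1 ∩ Reg S φ k.2}.Infinite := by
  obtain ⟨hn1, hn2, hlt, hS⟩ := mem_KF.1 hk
  have hne := KF_ne hk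
  obtain ⟨p, hp⟩ := hreg k.1 k.2 hne hn1 hn2
  by_cases h1 : k.1 ∈ S
  · have h2 : k.2 ∉ S := hS.resolve_left (not_not_intro h1)
    have hO : IsOpen {x : unitInterval | (x, φ k.1 x) ∈ Reg S φ k.2} :=
      (isOpen_Reg h2).preimage (continuous_id.prodMk (φ k.1).continuous)
    have hgr : p.2 = φ k.1 p.1 := by
      have := hp.1
      rwa [Reg, if_pos h1] at this
    have hOne : {x : unitInterval | (x, φ k.1 x) ∈ Reg S φ k.2}.Nonempty := by
      refine ⟨p.1, ?_⟩
      show (p.1, φ k.1 p.1) ∈ Reg S φ k.2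
      rw [← hgr]
      exact hp.2
    refine (isOpen_unitInterval_infinite hO hOne).mono ?_
    intro x hx
    refine ⟨φ k.1 x, ?_, hx⟩
    rw [Reg, if_pos h1]
    rfl
  · by_cases h2 : k.2 ∈ S
    · have hO : IsOpen {x : unitInterval | (x, φ k.2 x) ∈ Reg S φ k.1} :=
        (isOpen_Reg h1).preimage (continuous_id.prodMk (φ k.2).continuous)
      have hgr : p.2 = φ k.2 p.1 := by
        have := hp.2
        rwa [Reg, if_pos h2] at this
      have hOne : {x : unitInterval | (x, φ k.2 x) ∈ Reg S φ k.1}.Nonempty := by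
        refine ⟨p.1, ?_⟩
        show (p.1, φ k.2 p.1) ∈ Reg S φ k.1
        rw [← hgr]
        exact hp.1
      refine (isOpen_unitInterval_infinite hO hOne).mono ?_
      intro x hx
      refine ⟨φ k.2 x, hx, ?_⟩
      rw [Reg, if_pos h2]
      rfl
    · have hO : IsOpen (Prod.fst '' (Reg S φ k.1 ∩ Reg S φ k.2)) :=
        isOpenMap_fst _ ((isOpen_Reg h1).inter (isOpen_Reg h2))
      have hOne : (Prod.fst '' (Reg S φ k.1 ∩ Reg S φ k.2)).Nonempty := ⟨p.1, p, hp, rfl⟩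
      refine (isOpen_unitInterval_infinite hO hOne).mono ?_
      rintro x ⟨q, hq, rfl⟩
      exact ⟨q.2, hq⟩

end Final
/-- if all regions of pairs of incomparable elements intersect, the partial
representation by piecewise linear functions extends to a full representation. -/
theorem stmt3 {P : Type*} [Fintype P] [PartialOrder P] (S : Set P)
    (φ : P → C(unitInterval, ℝ))
    (hpl : ∀ a ∈ S, IsPWL (φ a))
    (hφ : ∀ a ∈ S, ∀ b ∈ S, (a < b ↔ ∀ x, φ a x < φ b x))
    (hreg : ∀ u v : P, u ≠ v → ¬ u < v → ¬ v < u → (Reg S φ u ∩ Reg S φ v).Nonempty) :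
    ∃ ψ : P → C(unitInterval, ℝ),
      (∀ u v : P, u < v ↔ ∀ x, ψ u x < ψ v x) ∧ ∀ a ∈ S, ψ a = φ a := by
  classical
  -- choose crossing points with distinct first coordinates
  obtain ⟨xc, hxc, hinj⟩ := exists_injOn_mem (KF S)
    (fun k => {x : unitInterval | ∃ y : ℝ, (x, y) ∈ Reg S φ k.1 ∩ Reg S φ k.2})
    (fun k hk => Xset_infinite hreg hk)
  have hyc : ∀ k ∈ KF S, ∃ y : ℝ, (xc k, y) ∈ Reg S φ k.1 ∩ Reg S φ k.2 :=
    fun k hk => hxc k hk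
  set yc : P × P → ℝ := fun k =>
    if h : ∃ y : ℝ, (xc k, y) ∈ Reg S φ k.1 ∩ Reg S φ k.2 then h.choose else 0 with hycdef
  have hxy : ∀ k ∈ KF S, (xc k, yc k) ∈ Reg S φ k.1 ∩ Reg S φ k.2 := by
    intro k hk
    have h := hyc k hk
    simp only [hycdef, dif_pos h]
    exact h.choose_spec
  -- the big constant
  set M : ℝ := 1 + Finset.univ.fold max 0 (fun a : P => ‖φ a‖)
      + (KF S).fold max 0 (fun k => |yc k|) with hMdef
  have hf1 : (0:ℝ) ≤ Finset.univ.fold max 0 (fun a : P => ‖φ a‖) :=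
    base_le_fold_max _ _ _
  have hf2 : (0:ℝ) ≤ (KF S).fold max 0 (fun k => |yc k|) :=
    base_le_fold_max _ _ _
  have hM0 : 0 < M := by rw [hMdef]; linarith
  have hM : ∀ a (x : unitInterval), |φ a x| < M := by
    intro a x
    have h1 : |φ a x| ≤ ‖φ a‖ := ContinuousMap.norm_coe_le_norm (φ a) x
    have h2 : ‖φ a‖ ≤ Finset.univ.fold max 0 (fun a : P => ‖φ a‖) :=
      le_fold_max_of_mem (f := fun a : P => ‖φ a‖) (Finset.mem_univ a)
    rw [hMdef]; linarith
  have hMy : ∀ k ∈ KF S, |yc k| < M := by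
    intro k hk
    have h2 : |yc k| ≤ (KF S).fold max 0 (fun k => |yc k|) :=
      le_fold_max_of_mem (f := fun k => |yc k|) hk
    rw [hMdef]; linarith
  -- the representation
  set Ψ : P → C(unitInterval, ℝ) := fun u =>
    if u ∈ S then φ u
    else ⟨psifun S φ M xc yc u, continuous_psifun hinj u⟩ with hΨdef
  have hΨS : ∀ a ∈ S, Ψ a = φ a := by
    intro a ha
    simp only [hΨdef, if_pos ha]
  have hΨn : ∀ u, u ∉ S → ∀ x, Ψ u x = psifun S φ M xc yc u x := by
    intro u hu x
    simp only [hΨdef, if_neg hu, ContinuousMap.coe_mk]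
  -- forward implication
  have hlt : ∀ u v : P, u < v → ∀ x, Ψ u x < Ψ v x := by
    intro u v huv x
    by_cases hu : u ∈ S <;> by_cases hv : v ∈ S
    · rw [hΨS u hu, hΨS v hv]
      exact (hφ u hu v hv).1 huv x
    · rw [hΨS u hu, hΨn v hv x]
      exact lt_of_le_of_lt (le_Lf hu huv x)
        (psifun_between hinj hM0 hM hMy hxy hφ hv x).1
    · rw [hΨn u hu x, hΨS v hv]
      exact lt_of_lt_of_le (psifun_between hinj hM0 hM hMy hxy hφ hu x).2
        (Uf_le hv huv x)
    · rw [hΨn u hu x, hΨn v hv x]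
      exact psifun_mono hinj hM0 hM hMy hxy hφ hu hv huv x
  -- crossing points for incomparable pairs
  have heq : ∀ u v : P, u ≠ v → ¬ u < v → ¬ v < u → ∃ x, Ψ u x = Ψ v x := by
    intro u v hne hn1 hn2
    by_cases hboth : u ∈ S ∧ v ∈ S
    · obtain ⟨p, hp1, hp2⟩ := hreg u v hne hn1 hn2
      rw [Reg, if_pos hboth.1] at hp1
      rw [Reg, if_pos hboth.2] at hp2
      refine ⟨p.1, ?_⟩
      rw [hΨS u hboth.1, hΨS v hboth.2, ← hp1, ← hp2]
    · -- at least one of u, v outside S : there is a pin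
      have hor : u ∉ S ∨ v ∉ S := by tauto
      have hval : ∀ k ∈ KF S, ∀ p, (p = k.1 ∨ p = k.2) → Ψ p (xc k) = yc k := by
        intro k hk p hp
        by_cases hpS : p ∈ S
        · have hmem : (xc k, yc k) ∈ Reg S φ p := by
            rcases hp with rfl | rfl
            · exact (hxy k hk).1
            · exact (hxy k hk).2
          rw [Reg, if_pos hpS] at hmem
          rw [hΨS p hpS]
          exact hmem.symm
        · rw [hΨn p hpS]
          exact psifun_at_pin hinj hM0 hM hMy hxy hk hp hpS
      have hne' : toLinearExtension u ≠ toLinearExtension v :=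
        fun h => hne (toLinearExtension_inj h)
      rcases lt_or_gt_of_ne hne' with hlt' | hlt'
      · have hk : (u, v) ∈ KF S := mem_KF.2 ⟨hn1, hn2, hlt', by tauto⟩
        exact ⟨xc (u, v), by
          rw [hval (u, v) hk u (Or.inl rfl), hval (u, v) hk v (Or.inr rfl)]⟩
      · have hk : (v, u) ∈ KF S := mem_KF.2 ⟨hn2, hn1, hlt', by tauto⟩
        exact ⟨xc (v, u), by
          rw [hval (v, u) hk u (Or.inr rfl), hval (v, u) hk v (Or.inl rfl)]⟩
  refine ⟨Ψ, fun u v => ⟨fun h => hlt u v h, fun h => ?_⟩, hΨS⟩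
  by_contra hn
  rcases eq_or_ne u v with rfl | hne
  · exact lt_irrefl _ (h 0)
  by_cases hvu : v < u
  · exact lt_irrefl _ (lt_trans (h 0) (hlt v u hvu 0))
  · obtain ⟨x, hx⟩ := heq u v hne hn hvu
    have := h x
    rw [hx] at this
    exact lt_irrefl _ this
end

section
/- Let G be a finite graph with at least two vertices. If G is disconnected, then the maximal proper strong modules of G are exactly the connected components of G. -/
/-- `M` is a module of `G`: every vertex outside `M` is adjacent to all or none of `M`. -/
def IsModule {V : Type*} (G : SimpleGraph V) (M : Set V) : Prop :=
  ∀ v ∉ M, (∀ u ∈ M, G.Adj v u) ∨ (∀ u ∈ M, ¬ G.Adj v u)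

/-- A strong module: a module that does not properly overlap any module. -/
def IsStrongModule {V : Type*} (G : SimpleGraph V) (M : Set V) : Prop :=
  IsModule G M ∧ ∀ N : Set V, IsModule G N → N ⊆ M ∨ M ⊆ N ∨ M ∩ N = ∅

/-- A maximal proper strong module of `G`. -/
def IsMaxStrongModule {V : Type*} (G : SimpleGraph V) (M : Set V) : Prop :=
  IsStrongModule G M ∧ M ⊂ Set.univ ∧
    ¬ ∃ N : Set V, IsStrongModule G N ∧ M ⊂ N ∧ N ⊂ Set.univ

namespace StrongModAux

variable {V : Type*} {G : SimpleGraph V}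

/-- The vertex set of a connected component. -/
def comp (G : SimpleGraph V) (c : G.ConnectedComponent) : Set V :=
  {v : V | G.connectedComponentMk v = c}

lemma mem_comp {c : G.ConnectedComponent} {v : V} :
    v ∈ comp G c ↔ G.connectedComponentMk v = c := Iff.rfl

lemma comp_nonempty (c : G.ConnectedComponent) : (comp G c).Nonempty := by
  obtain ⟨r, hr⟩ := c.exists_rep
  exact ⟨r, hr⟩

lemma comp_module (c : G.ConnectedComponent) : IsModule G (comp G c) := by
  intro v hv
  right
  intro u hu hadj
  exact hv (hu ▸ (SimpleGraph.ConnectedComponent.eq.mpr hadj.reachable))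

lemma union_comp_module (c d : G.ConnectedComponent) :
    IsModule G (comp G c ∪ comp G d) := by
  intro v hv
  right
  rintro u (hu | hu) hadj
  · exact hv (Or.inl (hu ▸ (SimpleGraph.ConnectedComponent.eq.mpr hadj.reachable)))
  · exact hv (Or.inr (hu ▸ (SimpleGraph.ConnectedComponent.eq.mpr hadj.reachable)))

lemma comp_ne_univ (hdis : ¬ G.Connected) [Nonempty V] (c : G.ConnectedComponent) :
    comp G c ≠ Set.univ := by
  intro h
  apply hdis
  constructor
  intro u w
  have hu : G.connectedComponentMk u = c := h.symm.subset (Set.mem_univ u)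
  have hw : G.connectedComponentMk w = c := h.symm.subset (Set.mem_univ w)
  exact SimpleGraph.ConnectedComponent.eq.mp (hu.trans hw.symm)

/-- A module containing vertices of two different components is closed under adjacency. -/
lemma step {N : Set V} (hN : IsModule G N) {x y : V} (hx : x ∈ N) (hy : y ∈ N)
    (hxy : G.connectedComponentMk x ≠ G.connectedComponentMk y) :
    ∀ p ∈ N, ∀ q, G.Adj p q → q ∈ N := by
  intro p hp q hadj
  by_contra hq
  rcases hN q hq with hall | hnone
  · exact hxy (((SimpleGraph.ConnectedComponent.eq.mpr (hall x hx).reachable).symm).trans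
      (SimpleGraph.ConnectedComponent.eq.mpr (hall y hy).reachable))
  · exact hnone p hp hadj.symm

lemma closed_of_reach {N : Set V} (hstep : ∀ p ∈ N, ∀ q, G.Adj p q → q ∈ N)
    {a b : V} (h : G.Reachable a b) (ha : a ∈ N) : b ∈ N := by
  obtain ⟨w⟩ := h
  revert ha
  induction w with
  | nil => exact fun h => h
  | cons h p ih => exact fun ha => ih (hstep _ ha _ h)

/-- Components are strong modules. -/
lemma comp_strong (c : G.ConnectedComponent) : IsStrongModule G (comp G c) := by
  refine ⟨comp_module c, ?_⟩
  intro N hN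
  by_cases hsub : N ⊆ comp G c
  · exact Or.inl hsub
  by_cases hint : comp G c ∩ N = ∅
  · exact Or.inr (Or.inr hint)
  refine Or.inr (Or.inl ?_)
  obtain ⟨a, hac, haN⟩ := Set.nonempty_iff_ne_empty.mpr hint
  obtain ⟨x, hxN, hxc⟩ := Set.not_subset.mp hsub
  have hne : G.connectedComponentMk a ≠ G.connectedComponentMk x := by
    intro h
    exact hxc (mem_comp.mpr (h.symm.trans (mem_comp.mp hac)))
  have hst := step hN haN hxN hne
  intro b hb
  have hr : G.Reachable a b :=
    SimpleGraph.ConnectedComponent.eq.mp ((mem_comp.mp hac).trans (mem_comp.mp hb).symm)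
  exact closed_of_reach hst hr haN

/-- Key contradiction: no strong proper module strictly contains a component. -/
lemma key {N : Set V} (hN : IsStrongModule G N) (hlt : N ⊂ Set.univ)
    {c : G.ConnectedComponent} (hCsub : comp G c ⊆ N) (hne : ¬ N ⊆ comp G c) : False := by
  obtain ⟨hNmod, hNstrong⟩ := hN
  obtain ⟨m, hm⟩ := comp_nonempty (G := G) c
  obtain ⟨x, hxN, hxc⟩ := Set.not_subset.mp hne
  obtain ⟨v, _, hv⟩ := Set.exists_of_ssubset hlt
  -- N contains vertices of two components, hence is adjacency-closed
  have hne2 : G.connectedComponentMk m ≠ G.connectedComponentMk x := by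
    intro h
    exact hxc (mem_comp.mpr (h ▸ (mem_comp.mp hm)))
  have hst := step hNmod (hCsub hm) hxN hne2
  set E := comp G (G.connectedComponentMk v) with hE
  have hEN : ∀ w ∈ E, w ∉ N := by
    intro w hw hwN
    exact hv (closed_of_reach hst
      (SimpleGraph.ConnectedComponent.eq.mp (mem_comp.mp hw)) hwN)
  rcases hNstrong (comp G c ∪ E) (union_comp_module _ _) with h1 | h2 | h3
  · exact hv (h1 (Or.inr (mem_comp.mpr rfl)))
  · rcases h2 hxN with h | h
    · exact hxc h
    · exact hEN x h hxN
  · exact (Set.eq_empty_iff_forall_notMem.mp h3 m) ⟨hCsub hm, Or.inl hm⟩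

/-- Components are maximal strong modules. -/
lemma comp_max (hdis : ¬ G.Connected) [Nonempty V] (c : G.ConnectedComponent) :
    IsMaxStrongModule G (comp G c) := by
  refine ⟨comp_strong c, ?_, ?_⟩
  · exact HasSubset.Subset.ssubset_of_ne (Set.subset_univ _) (comp_ne_univ hdis c)
  · rintro ⟨N, hN, hMN, hNU⟩
    exact key hN hNU hMN.subset (fun h => hMN.not_subset h)

end StrongModAux

open StrongModAux in
/-- in a disconnected graph with at least two vertices, the maximal proper
strong modules are exactly the connected components. -/
theorem stmt8 {V : Type*} [Fintype V] (G : SimpleGraph V)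
    (hcard : 1 < Fintype.card V) (hdis : ¬ G.Connected) (M : Set V) :
    IsMaxStrongModule G M ↔
      ∃ c : G.ConnectedComponent, M = {v : V | G.connectedComponentMk v = c} := by
  have : Nonempty V := Fintype.card_pos_iff.mp (by omega)
  constructor
  · rintro ⟨⟨hMmod, hMstrong⟩, hMlt, hMmax⟩
    rcases Set.eq_empty_or_nonempty M with hME | ⟨m, hm⟩
    · -- empty set is not maximal: a component strictly contains it
      exfalso
      obtain ⟨r⟩ := ‹Nonempty V›
      refine hMmax ⟨comp G (G.connectedComponentMk r), comp_strong _, ?_, ?_⟩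
      · rw [hME]
        exact (Set.ssubset_iff_of_subset (Set.empty_subset _)).mpr
          ⟨r, mem_comp.mpr rfl, fun h => h⟩
      · exact HasSubset.Subset.ssubset_of_ne (Set.subset_univ _) (comp_ne_univ hdis _)
    · set c := G.connectedComponentMk m with hc
      refine ⟨c, ?_⟩
      rcases hMstrong (comp G c) (comp_module c) with h1 | h2 | h3
      · -- comp ⊆ M : show M ⊆ comp too, else contradiction via `key`
        by_cases hsub : M ⊆ comp G c
        · exact Set.Subset.antisymm hsub h1
        · exact absurd (key ⟨hMmod, hMstrong⟩ hMlt h1 hsub) (fun h => h)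
      · -- M ⊆ comp : if strict, contradicts maximality
        rcases Set.eq_or_ssubset_of_subset h2 with h | h
        · exact h
        · exfalso
          exact hMmax ⟨comp G c, comp_strong c, h,
            HasSubset.Subset.ssubset_of_ne (Set.subset_univ _) (comp_ne_univ hdis c)⟩
      · exact absurd (Set.eq_empty_iff_forall_notMem.mp h3 m ⟨hm, mem_comp.mpr rfl⟩)
          (fun h => h)
  · rintro ⟨c, rfl⟩
    exact comp_max hdis c
end

section
/- If G is a finite graph with at least two vertices, then the collection of maximal proper strong modules of G forms a partition of V(G). -/
lemma singleton_strong {V : Type*} (G : SimpleGraph V) (v : V) :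
    IsStrongModule G {v} := by
  constructor
  · intro u _
    by_cases h : G.Adj u v
    · left; intro w hw; rw [Set.mem_singleton_iff] at hw; subst hw; exact h
    · right; intro w hw; rw [Set.mem_singleton_iff] at hw; subst hw; exact h
  · intro N _
    by_cases h : v ∈ N
    · right; left; intro w hw; rw [Set.mem_singleton_iff] at hw; subst hw; exact h
    · right; right
      ext w
      simp only [Set.mem_inter_iff, Set.mem_singleton_iff, Set.mem_empty_iff_false, iff_false,
        not_and]
      rintro rfl; exact h

lemma exists_max {V : Type*} [Fintype V] (G : SimpleGraph V)
    (hcard : 1 < Fintype.card V) (v : V) :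
    ∃ M, IsMaxStrongModule G M ∧ v ∈ M := by
  set S : Set (Set V) := {M | IsStrongModule G M ∧ v ∈ M ∧ M ≠ Set.univ} with hSdef
  have hS : S.Finite := Set.toFinite _
  obtain ⟨w, hw⟩ := Fintype.exists_ne_of_one_lt_card hcard v
  have hsing : ({v} : Set V) ≠ Set.univ := by
    intro h
    have : w ∈ ({v} : Set V) := h ▸ Set.mem_univ w
    exact hw this
  have hne' : S.Nonempty := ⟨{v}, singleton_strong G v, rfl, hsing⟩
  obtain ⟨M, hM, hmax⟩ := Set.Finite.exists_maximalFor id S hS hne'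
  obtain ⟨hMs, hvM, hMne⟩ := hM
  refine ⟨M, ⟨hMs, Set.ssubset_univ_iff.mpr hMne, ?_⟩, hvM⟩
  rintro ⟨N, hNs, hMN, hNuniv⟩
  have hvN : v ∈ N := hMN.1 hvM
  have hNS : N ∈ S := ⟨hNs, hvN, (Set.ssubset_univ_iff.mp hNuniv)⟩
  have := hmax hNS hMN.1.subset
  exact hMN.2 this

/-- the maximal proper strong modules of a graph with at least two vertices
form a partition of the vertex set. -/
theorem stmt10 {V : Type*} [Fintype V] (G : SimpleGraph V)
    (hcard : 1 < Fintype.card V) :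
    Setoid.IsPartition {M : Set V | IsMaxStrongModule G M} := by
  constructor
  · -- ∅ is not a max strong module
    intro hmem
    obtain ⟨hse, hprop, hnomax⟩ := hmem
    obtain ⟨v⟩ := Fintype.card_pos_iff.mp (Nat.lt_of_lt_of_le Nat.zero_lt_one hcard.le)
    obtain ⟨w, hw⟩ := Fintype.exists_ne_of_one_lt_card hcard v
    refine hnomax ⟨{v}, singleton_strong G v, ?_, ?_⟩
    · exact (Set.empty_ssubset).mpr ⟨v, rfl⟩
    · rw [Set.ssubset_univ_iff]
      intro h
      have : w ∈ ({v} : Set V) := h ▸ Set.mem_univ w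
      exact hw this
  · intro v
    obtain ⟨M, hM, hvM⟩ := exists_max G hcard v
    refine ⟨M, ⟨hM, hvM⟩, ?_⟩
    rintro N ⟨hN, hvN⟩
    -- N and M are both max strong modules containing v; show N = M
    obtain ⟨⟨hNmod, hNstr⟩, hNprop, hNmax⟩ := hN
    obtain ⟨⟨hMmod, hMstr⟩, hMprop, hMmax⟩ := hM
    rcases hNstr M hMmod with h | h | h
    · -- M ⊆ N
      rcases eq_or_ne N M with h' | h'
      · exact h'
      · exact absurd ⟨N, ⟨hNmod, hNstr⟩, ⟨h, fun hNM => h' (le_antisymm hNM h)⟩, hNprop⟩ hMmax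
    · -- N ⊆ M
      rcases eq_or_ne N M with h' | h'
      · exact h'
      · exact absurd ⟨M, ⟨hMmod, hMstr⟩, ⟨h, fun hMN => h' (le_antisymm h hMN)⟩, hMprop⟩ hNmax
    · exfalso
      have : v ∈ N ∩ M := ⟨hvN, hvM⟩
      rw [h] at this
      exact this
end

section
/- Every finite poset P admits a representation by continuous functions: there exists a map ψ assigning to each element of P a continuous function [0,1] → ℝ such that u < v in P if and only if ψ(u)(x) < ψ(v)(x) for all x ∈ [0,1] (in particular, functions of incomparable elements intersect). -/
/-- every finite poset admits a representation by continuous functions on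
`[0,1]`: `u < v` iff the function of `u` is pointwise strictly below that of `v`. -/
theorem stmt13 {P : Type*} [Fintype P] [PartialOrder P] :
    ∃ ψ : P → C(unitInterval, ℝ),
      ∀ u v : P, u < v ↔ ∀ x : unitInterval, ψ u x < ψ v x := by
  classical
  set n : ℕ := Fintype.card P with hn
  set e : P ≃ Fin n := Fintype.equivFin P with he
  set H : ℝ := (n : ℝ) with hH
  set K : ℝ := 2 * (n : ℝ) * (n : ℝ) with hK
  -- centers
  set c : P → ℝ := fun w => (e w : ℝ) / n with hc
  -- bumps
  set B : P → unitInterval → ℝ := fun w x => max 0 (H - K * |(x : ℝ) - c w|) with hB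
  have hBnonneg : ∀ w x, 0 ≤ B w x := fun w x => le_max_left _ _
  have hnpos : ∀ (u : P), 0 < n := fun u => Fintype.card_pos_iff.mpr ⟨u⟩
  -- center points as elements of unitInterval
  have hcmem : ∀ w : P, c w ∈ unitInterval := by
    intro w
    have h0 : 0 < (n : ℝ) := by exact_mod_cast hnpos w
    constructor
    · positivity
    · rw [div_le_one h0]
      exact_mod_cast (e w).2.le
  set pt : P → unitInterval := fun w => ⟨c w, hcmem w⟩ with hpt
  have hBself : ∀ w : P, B w (pt w) = H := by
    intro w
    simp only [hB, hpt]
    rw [sub_self, abs_zero, mul_zero, sub_zero]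
    exact max_eq_right (by rw [hH]; exact_mod_cast (hnpos w).le)
  have hBother : ∀ w w' : P, w ≠ w' → B w (pt w') = 0 := by
    intro w w' hne
    have h0 : 0 < (n : ℝ) := by exact_mod_cast hnpos w
    have hdist : 1 / n ≤ |c w' - c w| := by
      have hne' : (e w' : ℤ) ≠ (e w : ℤ) := by
        intro h
        apply hne
        apply e.injective
        exact Fin.ext (by exact_mod_cast h.symm)
      have h1 : (1 : ℝ) ≤ |(e w' : ℝ) - (e w : ℝ)| := by
        have := Int.one_le_abs (sub_ne_zero.mpr hne')
        calc (1:ℝ) ≤ |((e w' : ℤ) - (e w : ℤ) : ℤ)| := by exact_mod_cast this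
          _ = |(e w' : ℝ) - (e w : ℝ)| := by push_cast; ring_nf
      rw [hc]
      rw [div_sub_div_same, abs_div, abs_of_pos h0, div_le_div_iff₀ h0 h0]
      calc (1 : ℝ) * n = n := one_mul _
        _ ≤ |(e w' : ℝ) - (e w : ℝ)| * n := by
            nlinarith [abs_nonneg ((e w' : ℝ) - (e w : ℝ))]
    simp only [hB, hpt]
    apply max_eq_left
    have : H ≤ K * |c w' - c w| := by
      rw [hH, hK]
      calc (n : ℝ) ≤ 2 * n * n * (1 / n) := by
            rw [mul_one_div, mul_div_assoc]
            rw [div_self h0.ne']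
            nlinarith
        _ ≤ 2 * n * n * |c w' - c w| := by
            apply mul_le_mul_of_nonneg_left hdist; positivity
    linarith
  -- the functions
  have hcont : ∀ u : P, Continuous fun x : unitInterval =>
      ∑ w ∈ Finset.univ.filter (· ≤ u), (1 + B w x) := by
    intro u
    apply continuous_finset_sum
    intro w _
    apply Continuous.add continuous_const
    apply Continuous.max continuous_const
    apply Continuous.sub continuous_const
    apply Continuous.mul continuous_const
    exact (continuous_subtype_val.sub continuous_const).abs
  set ψ : P → C(unitInterval, ℝ) := fun u => ⟨_, hcont u⟩ with hψ
  refine ⟨ψ, ?_⟩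
  have key : ∀ u v : P, u < v → ∀ x, ψ u x < ψ v x := by
    intro u v huv x
    simp only [hψ, ContinuousMap.coe_mk]
    apply Finset.sum_lt_sum_of_subset
    · intro w hw
      simp only [Finset.mem_filter, Finset.mem_univ, true_and] at *
      exact hw.trans huv.le
    · simp only [Finset.mem_filter, Finset.mem_univ, true_and]; exact le_refl v
    · simp only [Finset.mem_filter, Finset.mem_univ, true_and]
      intro hvu
      exact absurd (le_antisymm huv.le hvu) (ne_of_lt huv)
    · have := hBnonneg v x; linarith
    · intro w _ _; have := hBnonneg w x; linarith
  intro u v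
  constructor
  · exact key u v
  · intro h
    by_contra hlt
    rcases eq_or_ne u v with rfl | hne
    · exact lt_irrefl _ (h (pt u))
    by_cases hvu : v < u
    · exact lt_asymm (key v u hvu (pt u)) (h (pt u))
    -- incomparable case: neither u ≤ v nor v ≤ u
    have huv : ¬ u ≤ v := fun hle => hlt (lt_of_le_of_ne hle hne)
    -- evaluate at pt u
    have hx := h (pt u)
    simp only [hψ, ContinuousMap.coe_mk] at hx
    set Su := Finset.univ.filter (· ≤ u) with hSu
    set Sv := Finset.univ.filter (· ≤ v) with hSv
    set f : P → ℝ := fun w => 1 + B w (pt u) with hf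
    have hsplit : ∀ s t : Finset P, ∑ w ∈ s, f w = ∑ w ∈ s \ t, f w + ∑ w ∈ s ∩ t, f w := by
      intro s t
      rw [add_comm]
      exact (Finset.sum_inter_add_sum_sdiff s t f).symm
    have hcomm : Su ∩ Sv = Sv ∩ Su := Finset.inter_comm _ _
    have h1 : ∑ w ∈ Su, f w = ∑ w ∈ Su \ Sv, f w + ∑ w ∈ Su ∩ Sv, f w := hsplit Su Sv
    have h2 : ∑ w ∈ Sv, f w = ∑ w ∈ Sv \ Su, f w + ∑ w ∈ Su ∩ Sv, f w := by
      rw [hsplit Sv Su, hcomm]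
    -- lower bound on Su \ Sv side: contains u, with B u (pt u) = H
    have humem : u ∈ Su \ Sv := by
      simp only [hSu, hSv, Finset.mem_sdiff, Finset.mem_filter, Finset.mem_univ, true_and]
      exact ⟨le_refl u, huv⟩
    have hlow : 1 + H ≤ ∑ w ∈ Su \ Sv, f w := by
      have := Finset.single_le_sum (f := f) (fun w _ =>
        add_nonneg zero_le_one (hBnonneg w (pt u))) humem
      rw [hf] at this
      simp only at this
      rw [hBself u] at this
      exact this
    -- upper bound on Sv \ Su side: all bumps vanish at pt u, so sum = card ≤ n
    have hup : ∑ w ∈ Sv \ Su, f w ≤ n := by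
      have hvanish : ∀ w ∈ Sv \ Su, f w = 1 := by
        intro w hw
        have hwne : w ≠ u := by
          simp only [hSv, hSu, Finset.mem_sdiff, Finset.mem_filter, Finset.mem_univ,
            true_and] at hw
          intro hh; exact hw.2 (hh ▸ le_refl u)
        simp only [hf, hBother w u hwne, add_zero]
      rw [Finset.sum_congr rfl hvanish, Finset.sum_const, nsmul_eq_mul, mul_one]
      have : (Sv \ Su).card ≤ n := by
        rw [hn]
        exact (Finset.card_le_univ _).trans_eq (Finset.card_univ)
      exact_mod_cast this
    have hHn : H = (n : ℝ) := hH
    have : ∑ w ∈ Sv, f w < ∑ w ∈ Su, f w := by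
      rw [h1, h2]
      have h3 : (0:ℝ) < 1 := one_pos
      linarith only [hlow, hup, hHn, h3]
    simp only [hf] at this
    exact lt_asymm hx this
end

section
/- Complements of finite comparability graphs are exactly the function graphs: a finite graph G is the intersection graph of a family of continuous functions [0,1] → ℝ (vertices u, v adjacent iff their functions intersect) if and only if the complement of G admits a transitive orientation. -/
section Helpers

theorem exists_strict_mono' {V : Type*} [Fintype V] (q : V → V → Prop)
    (htr : ∀ a b c, q a b → q b c → q a c) (hir : ∀ a, ¬ q a a) :
    ∃ f : V → ℝ, ∀ x y, q x y → f x < f y := by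
  classical
  set q' : V → V → Prop := fun x y => x = y ∨ q x y with hq'
  haveI : IsRefl V q' := ⟨fun a => Or.inl rfl⟩
  haveI : IsTrans V q' := by
    constructor
    rintro a b c (rfl | hab) (rfl | hbc)
    · exact Or.inl rfl
    · exact Or.inr hbc
    · exact Or.inr hab
    · exact Or.inr (htr _ _ _ hab hbc)
  haveI : IsAntisymm V q' := by
    constructor
    rintro a b (rfl | hab) (h | hba)
    · rfl
    · rfl
    · exact h.symm
    · exact absurd (htr _ _ _ hab hba) (hir a)
  haveI : IsPreorder V q' := ⟨⟩
  haveI : IsPartialOrder V q' := ⟨⟩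
  obtain ⟨s, hs, hsub⟩ := extend_partialOrder q'
  haveI := hs
  refine ⟨fun v => ((Finset.univ.filter fun x => s x v).card : ℝ), fun x y hxy => ?_⟩
  have hsxy : s x y := hsub x y (Or.inr hxy)
  have hxny : x ≠ y := fun h => hir x (h ▸ hxy)
  have hss : (Finset.univ.filter fun z => s z x) ⊂ (Finset.univ.filter fun z => s z y) := by
    constructor
    · intro z hz
      simp only [Finset.mem_filter, Finset.mem_univ, true_and] at *
      exact IsTrans.trans _ _ _ hz hsxy
    · intro hsub2
      have hy : y ∈ Finset.univ.filter fun z => s z y := by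
        simp [Std.Refl.refl (r := s) y]
      have := hsub2 hy
      simp only [Finset.mem_filter, Finset.mem_univ, true_and] at this
      exact hxny (Std.Antisymm.antisymm _ _ hsxy this)
  simp only [Nat.cast_lt]
  exact Finset.card_lt_card hss

theorem exists_pair_mono' {V : Type*} [Fintype V] (r : V → V → Prop)
    (htr : ∀ a b c, r a b → r b c → r a c) (has : ∀ a b, r a b → ¬ r b a) (a b : V) :
    ∃ f : V → ℝ, (∀ x y, r x y → f x < f y) ∧
      (a ≠ b → ¬ r a b → ¬ r b a → f a < f b) := by
  have hir : ∀ x, ¬ r x x := fun x hx => has _ _ hx hx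
  by_cases h : a ≠ b ∧ ¬ r a b ∧ ¬ r b a
  · obtain ⟨hab, hnab, hnba⟩ := h
    set q : V → V → Prop :=
      fun x y => r x y ∨ ((x = a ∨ r x a) ∧ (y = b ∨ r b y)) with hq
    have hqtr : ∀ x y z, q x y → q y z → q x z := by
      rintro x y z (hxy | ⟨hxa, hyb⟩) (hyz | ⟨hya, hzb⟩)
      · exact Or.inl (htr _ _ _ hxy hyz)
      · refine Or.inr ⟨?_, hzb⟩
        rcases hya with rfl | hya
        · exact Or.inr hxy
        · exact Or.inr (htr _ _ _ hxy hya)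
      · refine Or.inr ⟨hxa, ?_⟩
        rcases hyb with rfl | hyb
        · exact Or.inr hyz
        · exact Or.inr (htr _ _ _ hyb hyz)
      · exfalso
        rcases hyb with rfl | hyb <;> rcases hya with hya | hya
        · exact hab hya.symm
        · exact hnba hya
        · subst hya; exact hnba hyb
        · exact hnba (htr _ _ _ hyb hya)
    have hqir : ∀ x, ¬ q x x := by
      rintro x (hx | ⟨hxa, hxb⟩)
      · exact hir _ hx
      · rcases hxa with rfl | hxa <;> rcases hxb with hxb | hxb
        · exact hab hxb
        · exact hnba hxb
        · subst hxb; exact hnba hxa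
        · exact hnba (htr _ _ _ hxb hxa)
    obtain ⟨f, hf⟩ := exists_strict_mono' q hqtr hqir
    exact ⟨f, fun x y hxy => hf _ _ (Or.inl hxy),
      fun _ _ _ => hf _ _ (Or.inr ⟨Or.inl rfl, Or.inl rfl⟩)⟩
  · obtain ⟨f, hf⟩ := exists_strict_mono' r htr hir
    refine ⟨f, hf, fun h1 h2 h3 => absurd ⟨h1, h2, h3⟩ h⟩

noncomputable def hat (m : ℝ) (i : ℕ) (x : ℝ) : ℝ := max 0 (1 - |m * x - i|)

theorem hat_cont (m : ℝ) (i : ℕ) : Continuous (hat m i) := by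
  unfold hat; fun_prop

theorem hat_nonneg (m : ℝ) (i : ℕ) (x : ℝ) : 0 ≤ hat m i x := le_max_left _ _

theorem hat_node_self (m : ℝ) (hm : m ≠ 0) (i : ℕ) : hat m i ((i : ℝ) / m) = 1 := by
  unfold hat
  rw [mul_div_cancel₀ _ hm]
  simp

theorem hat_node_ne (m : ℝ) (hm : m ≠ 0) {i j : ℕ} (hij : i ≠ j) :
    hat m j ((i : ℝ) / m) = 0 := by
  unfold hat
  rw [mul_div_cancel₀ _ hm]
  have h1 : (1 : ℝ) ≤ |(i : ℝ) - j| := by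
    have : (1 : ℤ) ≤ |(i : ℤ) - j| := Int.one_le_abs (by omega)
    exact_mod_cast this
  have : (1 : ℝ) - |(i : ℝ) - j| ≤ 0 := by linarith
  exact max_eq_left this

theorem hat_pos_exists (m : ℝ) (hm : 0 < m) {x : ℝ} (hx0 : 0 ≤ x) (hx1 : x ≤ 1) :
    ∃ i : ℕ, (i : ℝ) ≤ m ∧ 0 < hat m i x := by
  have hmx0 : 0 ≤ m * x := mul_nonneg hm.le hx0
  refine ⟨⌊m * x⌋₊, ?_, ?_⟩
  · calc (⌊m * x⌋₊ : ℝ) ≤ m * x := Nat.floor_le hmx0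
    _ ≤ m * 1 := by nlinarith
    _ = m := mul_one m
  · have h1 : (⌊m * x⌋₊ : ℝ) ≤ m * x := Nat.floor_le hmx0
    have h2 : m * x < ⌊m * x⌋₊ + 1 := Nat.lt_floor_add_one _
    have : 0 < 1 - |m * x - ⌊m * x⌋₊| := by
      have habs : |m * x - ⌊m * x⌋₊| < 1 := by rw [abs_lt]; constructor <;> linarith
      linarith
    exact lt_max_of_lt_right this

theorem sum_hat_pos {n : ℕ} (hn : 2 ≤ n) (d : Fin n → ℝ) (hd : ∀ i, 0 < d i)
    {x : ℝ} (hx0 : 0 ≤ x) (hx1 : x ≤ 1) :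
    0 < ∑ i : Fin n, d i * hat ((n : ℝ) - 1) i x := by
  have hm : (0 : ℝ) < (n : ℝ) - 1 := by
    have : (2 : ℝ) ≤ n := by exact_mod_cast hn
    linarith
  obtain ⟨i, him, hipos⟩ := hat_pos_exists _ hm hx0 hx1
  have hin : i < n := by
    have : (i : ℝ) < n := by linarith
    exact_mod_cast this
  exact Finset.sum_pos' (fun j _ => mul_nonneg (hd j).le (hat_nonneg _ _ _))
    ⟨⟨i, hin⟩, Finset.mem_univ _, mul_pos (hd _) hipos⟩

theorem sum_hat_node {n : ℕ} (hn : 2 ≤ n) (d : Fin n → ℝ) (i : Fin n) :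
    ∑ j : Fin n, d j * hat ((n : ℝ) - 1) j ((i : ℝ) / ((n : ℝ) - 1)) = d i := by
  have hm : ((n : ℝ) - 1) ≠ 0 := by
    have : (2 : ℝ) ≤ n := by exact_mod_cast hn
    intro h; linarith
  rw [Finset.sum_eq_single i]
  · rw [hat_node_self _ hm, mul_one]
  · intro j _ hji
    rw [hat_node_ne _ hm (fun h => hji (Fin.ext h.symm)), mul_zero]
  · intro h; exact absurd (Finset.mem_univ i) h

theorem node_mem {n : ℕ} (hn : 2 ≤ n) (i : Fin n) :
    (i : ℝ) / ((n : ℝ) - 1) ∈ Set.Icc (0:ℝ) 1 := by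
  have hm : (0 : ℝ) < (n : ℝ) - 1 := by
    have : (2 : ℝ) ≤ n := by exact_mod_cast hn
    linarith
  constructor
  · positivity
  · rw [div_le_one hm]
    have h1 : (i : ℕ) + 1 ≤ n := i.isLt
    have : ((i : ℕ) : ℝ) + 1 ≤ n := by exact_mod_cast h1
    linarith

theorem sign_const (f : C(unitInterval, ℝ)) (h : ∀ x, f x ≠ 0) :
    (∀ x, 0 < f x) ∨ (∀ x, f x < 0) := by
  by_contra hc
  push_neg at hc
  obtain ⟨⟨x₁, hx₁⟩, ⟨x₂, hx₂⟩⟩ := hc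
  have hx₁' : f x₁ < 0 := lt_of_le_of_ne hx₁ (h x₁)
  have hx₂' : 0 < f x₂ := lt_of_le_of_ne hx₂ (Ne.symm (h x₂))
  set F : ℝ → ℝ := fun t => f (Set.projIcc 0 1 zero_le_one t) with hF
  have hFc : Continuous F := f.continuous.comp continuous_projIcc
  have h1 : F ↑x₁ = f x₁ := by
    simp [hF, Set.projIcc_of_mem zero_le_one x₁.2]
  have h2 : F ↑x₂ = f x₂ := by
    simp [hF, Set.projIcc_of_mem zero_le_one x₂.2]
  have : (0:ℝ) ∈ Set.uIcc (F ↑x₁) (F ↑x₂) := by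
    rw [h1, h2, Set.mem_uIcc]
    left; exact ⟨hx₁'.le, hx₂'.le⟩
  obtain ⟨t, _, ht⟩ := intermediate_value_uIcc hFc.continuousOn this
  exact h (Set.projIcc 0 1 zero_le_one t) ht

end Helpers

/-- `G` admits a transitive orientation. -/
def HasTransOrientation {V : Type*} (G : SimpleGraph V) : Prop :=
  ∃ r : V → V → Prop, (∀ a b c : V, r a b → r b c → r a c) ∧
    (∀ a b : V, r a b → ¬ r b a) ∧ ∀ a b : V, G.Adj a b ↔ (r a b ∨ r b a)

/-- a finite graph is a function graph (intersection graph of continuous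
functions `[0,1] → ℝ`) iff its complement admits a transitive orientation. -/
theorem stmt14 {V : Type*} [Fintype V] (G : SimpleGraph V) :
    (∃ ψ : V → C(unitInterval, ℝ),
      ∀ u v : V, u ≠ v → (G.Adj u v ↔ ∃ x : unitInterval, ψ u x = ψ v x)) ↔
    HasTransOrientation Gᶜ := by
  classical
  constructor
  · -- function graph → complement has transitive orientation
    rintro ⟨ψ, hψ⟩
    refine ⟨fun u v => u ≠ v ∧ ∀ x, ψ u x < ψ v x, ?_, ?_, ?_⟩
    · rintro a b c ⟨hab, h1⟩ ⟨hbc, h2⟩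
      refine ⟨fun h => ?_, fun x => (h1 x).trans (h2 x)⟩
      subst h
      exact absurd ((h1 0).trans (h2 0)) (lt_irrefl _)
    · rintro a b ⟨hab, h1⟩ ⟨hba, h2⟩
      exact absurd ((h1 0).trans (h2 0)) (lt_irrefl _)
    · intro a b
      rw [SimpleGraph.compl_adj]
      constructor
      · rintro ⟨hne, hnadj⟩
        rw [hψ a b hne] at hnadj
        push_neg at hnadj
        have hne0 : ∀ x, (ψ b - ψ a) x ≠ 0 := by
          intro x
          simp only [ContinuousMap.sub_apply]
          exact fun h => hnadj x (sub_eq_zero.mp h).symm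
        rcases sign_const _ hne0 with hp | hn
        · left
          refine ⟨hne, fun x => ?_⟩
          have := hp x
          simp only [ContinuousMap.sub_apply] at this
          linarith
        · right
          refine ⟨hne.symm, fun x => ?_⟩
          have := hn x
          simp only [ContinuousMap.sub_apply] at this
          linarith
      · rintro (⟨hne, hlt⟩ | ⟨hne, hlt⟩)
        · refine ⟨hne, ?_⟩
          rw [hψ a b hne]
          rintro ⟨x, hx⟩
          exact absurd hx (hlt x).ne
        · refine ⟨hne.symm, ?_⟩
          rw [hψ a b hne.symm]
          rintro ⟨x, hx⟩
          exact absurd hx.symm (hlt x).ne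
  · -- complement has transitive orientation → function graph
    rintro ⟨r, htr, has, hadj⟩
    choose g hg1 hg2 using fun p : V × V => exists_pair_mono' r htr has p.1 p.2
    set n := Fintype.card (V × V) with hn
    set e : (V × V) ≃ Fin n := Fintype.equivFin (V × V) with he
    set m : ℝ := (n : ℝ) - 1 with hm
    refine ⟨fun v => ⟨fun x => ∑ i : Fin n, g (e.symm i) v * hat m i x, ?_⟩, ?_⟩
    · exact continuous_finset_sum _ fun i _ =>
        continuous_const.mul ((hat_cont m i).comp continuous_subtype_val)
    intro u v huv
    have hn2 : 2 ≤ n := by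
      haveI : Nontrivial V := ⟨u, v, huv⟩
      have h2 : 2 ≤ Fintype.card V := Fintype.one_lt_card
      rw [hn, Fintype.card_prod]
      nlinarith
    set d : Fin n → ℝ := fun i => g (e.symm i) u - g (e.symm i) v with hd
    have hdiff : ∀ x : unitInterval,
        (∑ i : Fin n, g (e.symm i) u * hat m i ↑x) - (∑ i : Fin n, g (e.symm i) v * hat m i ↑x)
          = ∑ i : Fin n, d i * hat m i ↑x := by
      intro x
      rw [← Finset.sum_sub_distrib]
      exact Finset.sum_congr rfl fun i _ => by rw [hd]; ring
    constructor
    · -- adjacent → functions intersect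
      intro hadj'
      have hnc : ¬ (r u v ∨ r v u) := by
        rw [← hadj u v]
        simp [SimpleGraph.compl_adj, hadj']
      push_neg at hnc
      obtain ⟨hnr1, hnr2⟩ := hnc
      have hd1 : d (e (u, v)) < 0 := by
        rw [hd]
        simp only [Equiv.symm_apply_apply]
        have := hg2 (u, v) huv hnr1 hnr2
        simpa using sub_neg.mpr this
      have hd2 : 0 < d (e (v, u)) := by
        rw [hd]
        simp only [Equiv.symm_apply_apply]
        have := hg2 (v, u) huv.symm hnr2 hnr1
        simpa using sub_pos.mpr this
      set F : ℝ → ℝ := fun x => ∑ i : Fin n, d i * hat m i x with hF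
      have hFc : Continuous F :=
        continuous_finset_sum _ fun i _ => continuous_const.mul (hat_cont m i)
      set t₁ : ℝ := ((e (u, v) : ℕ) : ℝ) / m with ht₁
      set t₂ : ℝ := ((e (v, u) : ℕ) : ℝ) / m with ht₂
      have hFt₁ : F t₁ = d (e (u, v)) := sum_hat_node hn2 d _
      have hFt₂ : F t₂ = d (e (v, u)) := sum_hat_node hn2 d _
      have h0 : (0:ℝ) ∈ Set.uIcc (F t₁) (F t₂) := by
        rw [hFt₁, hFt₂, Set.mem_uIcc]
        left; exact ⟨hd1.le, hd2.le⟩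
      obtain ⟨x₀, hx₀mem, hx₀⟩ := intermediate_value_uIcc hFc.continuousOn h0
      have ht₁m := node_mem hn2 (e (u, v))
      have ht₂m := node_mem hn2 (e (v, u))
      have hx₀I : x₀ ∈ Set.Icc (0:ℝ) 1 := by
        rw [Set.uIcc] at hx₀mem
        obtain ⟨hl, hr⟩ := hx₀mem
        constructor
        · exact le_trans (le_inf ht₁m.1 ht₂m.1) hl
        · exact le_trans hr (sup_le ht₁m.2 ht₂m.2)
      refine ⟨⟨x₀, hx₀I⟩, ?_⟩
      simp only [ContinuousMap.coe_mk]
      exact sub_eq_zero.mp ((hdiff ⟨x₀, hx₀I⟩).trans hx₀)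
    · -- functions intersect → adjacent (contrapositive)
      intro hex
      by_contra hna
      have hc : r u v ∨ r v u := by
        rw [← hadj u v]
        exact (SimpleGraph.compl_adj G u v).mpr ⟨huv, hna⟩
      obtain ⟨x, hx⟩ := hex
      simp only [ContinuousMap.coe_mk] at hx
      have hzero : ∑ i : Fin n, d i * hat m i ↑x = 0 := by
        rw [← hdiff x, hx, sub_self]
      rcases hc with hruv | hrvu
      · have hdneg : ∀ i, 0 < -d i := fun i => by
          have := hg1 (e.symm i) u v hruv
          rw [hd]; simpa using sub_neg.mpr this
        have := sum_hat_pos hn2 (fun i => -d i) hdneg x.2.1 x.2.2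
        have heq : ∑ i : Fin n, (-d i) * hat m i ↑x = -∑ i : Fin n, d i * hat m i ↑x := by
          rw [← Finset.sum_neg_distrib]
          exact Finset.sum_congr rfl fun i _ => by ring
        rw [heq, hzero] at this
        linarith
      · have hdpos : ∀ i, 0 < d i := fun i => by
          have := hg1 (e.symm i) v u hrvu
          rw [hd]; simpa using sub_pos.mpr this
        have := sum_hat_pos hn2 d hdpos x.2.1 x.2.2
        rw [hzero] at this
        exact lt_irrefl _ this
end

section
/- Let G be a finite comparability graph, let φ be a partial representation of G defined on R ⊆ V(G) (a function representation of the induced subgraph G[R] by continuous functions [0,1] → ℝ of the complement-order type), let M be a strong module of G with M ∩ R ≠ ∅, let u ∈ M be a vertex, and let a ∈ R \ M be adjacent to u. Then for any two transitive orientations P, P' of G that both respect φ, the edge au receives the same orientation in P and in P'. -/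
/-- `r` is a transitive orientation of `G`. -/
def IsTransOrientation {V : Type*} (G : SimpleGraph V) (r : V → V → Prop) : Prop :=
  (∀ a b c : V, r a b → r b c → r a c) ∧ (∀ a b : V, r a b → ¬ r b a) ∧
    ∀ a b : V, G.Adj a b ↔ (r a b ∨ r b a)

/-- Gallai's module-orientation lemma: a transitive orientation cannot orient two edges
from an outside vertex `a` into a strong module `M` in opposite directions. -/
lemma gallai_strong {V : Type*} (G : SimpleGraph V) (M : Set V) (hM : IsStrongModule G M)
    (a : V) (haM : a ∉ M) (hall : ∀ w ∈ M, G.Adj a w)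
    (r : V → V → Prop) (hr : IsTransOrientation G r)
    (u b : V) (hu : u ∈ M) (hb : b ∈ M) (hau : r a u) (hba : r b a) : False := by
  obtain ⟨htr, hasym, hor⟩ := hr
  -- A : vertices of M above a ; S : outside vertices squeezed between B and A
  set A : Set V := {w | w ∈ M ∧ r a w} with hA
  set B : Set V := {w | w ∈ M ∧ r w a} with hB
  set S : Set V := {v | v ∉ M ∧ (∀ w ∈ B, r w v) ∧ (∀ w ∈ A, r v w)} with hS
  have haS : a ∈ S := ⟨haM, fun w hw => hw.2, fun w hw => hw.2⟩
  set N : Set V := A ∪ S with hN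
  -- every vertex of M is in A or B
  have hAB : ∀ w ∈ M, w ∈ A ∨ w ∈ B := by
    intro w hw
    rcases (hor a w).1 (hall w hw) with h | h
    · exact Or.inl ⟨hw, h⟩
    · exact Or.inr ⟨hw, h⟩
  -- N is a module
  have hNmod : IsModule G N := by
    intro v hv
    by_cases hvM : v ∈ M
    · -- v ∈ M \ A, so v ∈ B ; it is adjacent to all of N
      have hvB : v ∈ B := by
        rcases hAB v hvM with h | h
        · exact absurd (Or.inl h) hv
        · exact h
      left
      rintro x (hx | hx)
      · exact (hor v x).2 (Or.inl (htr v a x hvB.2 hx.2))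
      · exact (hor v x).2 (Or.inl (hx.2.1 v hvB))
    · -- v outside M and not in S
      have hvS : v ∉ S := fun h => hv (Or.inr h)
      rcases hM.1 v hvM with hone | hnone
      · -- v adjacent to all of M
        -- since v ∉ S, some squeezing condition fails
        have : (∃ w ∈ B, ¬ r w v) ∨ (∃ w ∈ A, ¬ r v w) := by
          by_contra h
          push_neg at h
          exact hvS ⟨hvM, h.1, h.2⟩
        left
        rcases this with ⟨w, hwB, hwv⟩ | ⟨w, hwA, hwv⟩
        · have hvw : r v w := by
            rcases (hor v w).1 (hone w hwB.1) with h | h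
            · exact h
            · exact absurd h hwv
          rintro x (hx | hx)
          · exact hone x hx.1
          · exact (hor v x).2 (Or.inl (htr v w x hvw (hx.2.1 w hwB)))
        · have hwv' : r w v := by
            rcases (hor v w).1 (hone w hwA.1) with h | h
            · exact absurd h hwv
            · exact h
          rintro x (hx | hx)
          · exact hone x hx.1
          · exact (hor v x).2 (Or.inr (htr x w v (hx.2.2 w hwA) hwv'))
      · -- v adjacent to nothing in M : then adjacent to nothing in N
        right
        rintro x (hx | hx)
        · exact hnone x hx.1
        · intro hadjvx
          rcases (hor v x).1 hadjvx with h | h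
          · -- r v x, r x u gives adjacency to u ∈ M
            have : r v u := htr v x u h (hx.2.2 u ⟨hu, hau⟩)
            exact hnone u hu ((hor v u).2 (Or.inl this))
          · have : r b v := htr b x v (hx.2.1 b ⟨hb, hba⟩) h
            exact hnone b hb (((hor v b).2 (Or.inr this)))
  -- strongness is violated
  rcases hM.2 N hNmod with h | h | h
  · exact haM (h (Or.inr haS))
  · rcases h hb with hx | hx
    · exact hasym a b hx.2 hba
    · exact hx.1 hb
  · have : u ∈ M ∩ N := ⟨hu, Or.inl ⟨hu, hau⟩⟩
    rw [h] at this
    exact this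

/-- for a represented strong module `M`, a vertex `u ∈ M` and a represented
vertex `a ∉ M` adjacent to `u`, all transitive orientations of `G` respecting the partial
representation `φ` orient the edge `au` the same way. -/
theorem stmt15 {V : Type*} [Fintype V] (G : SimpleGraph V)
    (hG : ∃ r : V → V → Prop, IsTransOrientation G r)
    (R : Set V) (φ : V → C(unitInterval, ℝ))
    (hφ : ∀ a ∈ R, ∀ b ∈ R, a ≠ b →
      (G.Adj a b ↔ ((∀ x, φ a x < φ b x) ∨ (∀ x, φ b x < φ a x))))
    (M : Set V) (hM : IsStrongModule G M) (hMR : (M ∩ R).Nonempty)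
    (u : V) (hu : u ∈ M) (a : V) (haR : a ∈ R) (haM : a ∉ M) (hadj : G.Adj a u)
    (r r' : V → V → Prop)
    (hr : IsTransOrientation G r) (hr' : IsTransOrientation G r')
    (hrφ : ∀ b ∈ R, ∀ c ∈ R, r b c → ∀ x, φ b x < φ c x)
    (hr'φ : ∀ b ∈ R, ∀ c ∈ R, r' b c → ∀ x, φ b x < φ c x) :
    r a u ↔ r' a u := by
  obtain ⟨b, hbM, hbR⟩ := hMR
  -- a is adjacent to all of M
  have hall : ∀ w ∈ M, G.Adj a w := by
    rcases hM.1 a haM with h | h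
    · exact h
    · exact absurd hadj (h u hu)
  have hab : G.Adj a b := hall b hbM
  have hau : G.Adj a u := hadj
  -- the representation pins the orientation of the edge ab
  have key : r a b ↔ r' a b := by
    constructor
    · intro h
      rcases (hr'.2.2 a b).1 hab with h' | h'
      · exact h'
      · exact absurd (hrφ a haR b hbR h 0) (lt_asymm (hr'φ b hbR a haR h' 0))
    · intro h
      rcases (hr.2.2 a b).1 hab with h' | h'
      · exact h'
      · exact absurd (hr'φ a haR b hbR h 0) (lt_asymm (hrφ b hbR a haR h' 0))
  -- within a single orientation, edges au and ab agree (Gallai)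
  have same : ∀ s : V → V → Prop, IsTransOrientation G s → (s a u ↔ s a b) := by
    intro s hs
    constructor
    · intro h
      rcases (hs.2.2 a b).1 hab with h' | h'
      · exact h'
      · exact absurd (gallai_strong G M hM a haM hall s hs u b hu hbM h h') id
    · intro h
      rcases (hs.2.2 a u).1 hau with h' | h'
      · exact h'
      · exact absurd (gallai_strong G M hM a haM hall s hs b u hbM hu h h') id
  rw [same r hr, key, same r' hr']
end
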